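/- arXiv:1409.1291 — 7 statements merged into one kernel-verified Lean document; each statement's English description precedes it below -/
import Mathlib

section
/- Any C² solution u of u''(x) = λ/(1+u(x))² on (-1,1) with u(±1) = 0, u > -1, and λ > 0 is an even function: u(-x) = u(x) for all x ∈ (-1,1). -/
open Set Filter Topology

/-- Scalar Lipschitz estimate for the MEMS nonlinearity. -/
lemma mems_scalar_lip {lam δ a b : ℝ} (hl : 0 ≤ lam) (hδ : 0 < δ)
    (ha : δ ≤ 1 + a) (hb : δ ≤ 1 + b) :
    |lam / (1 + a) ^ 2 - lam / (1 + b) ^ 2| ≤ 2 * lam / δ ^ 3 * |a - b| := by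
  set A := 1 + a with hA_def
  set B := 1 + b with hB_def
  have hA : 0 < A := lt_of_lt_of_le hδ ha
  have hB : 0 < B := lt_of_lt_of_le hδ hb
  have h1 : lam / A ^ 2 - lam / B ^ 2 = lam * (B - A) * (B + A) / (A ^ 2 * B ^ 2) := by
    field_simp
    ring
  have hABpos : (0:ℝ) < A ^ 2 * B ^ 2 := by positivity
  have hab : a - b = A - B := by rw [hA_def, hB_def]; ring
  rw [h1, abs_div, abs_of_pos hABpos, hab]
  have h2 : |lam * (B - A) * (B + A)| = lam * |A - B| * (A + B) := by
    rw [abs_mul, abs_mul, abs_of_nonneg hl, abs_of_pos (by linarith : (0:ℝ) < B + A),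
      abs_sub_comm]
    ring
  rw [h2, div_le_iff₀ hABpos]
  have e1 : δ * δ ≤ B * B := mul_le_mul hb hb hδ.le hB.le
  have k1 : δ ^ 3 ≤ A * B ^ 2 := by nlinarith [mul_le_mul ha e1 (by positivity) hA.le]
  have e2 : δ * δ ≤ A * A := mul_le_mul ha ha hδ.le hA.le
  have k2 : δ ^ 3 ≤ A ^ 2 * B := by nlinarith [mul_le_mul hb e2 (by positivity) hB.le]
  have key : (A + B) * δ ^ 3 ≤ 2 * (A ^ 2 * B ^ 2) := by
    nlinarith [mul_le_mul_of_nonneg_left k1 hA.le, mul_le_mul_of_nonneg_left k2 hB.le]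
  have key' : A + B ≤ 2 * (A ^ 2 * B ^ 2) / δ ^ 3 := (le_div_iff₀ (by positivity)).2 key
  calc lam * |A - B| * (A + B) ≤ lam * |A - B| * (2 * (A ^ 2 * B ^ 2) / δ ^ 3) :=
        mul_le_mul_of_nonneg_left key' (by positivity)
    _ = 2 * lam / δ ^ 3 * |A - B| * (A ^ 2 * B ^ 2) := by ring

/-- The first-order vector field for the MEMS ODE is Lipschitz where `m ≤ p.1`. -/
lemma mems_lip (lam m : ℝ) (hl : 0 < lam) (hm : -1 < m) (t : ℝ) :
    LipschitzOnWith (max 1 (2 * lam / (1 + m) ^ 3)).toNNReal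
      (fun p : ℝ × ℝ => (p.2, lam / (1 + p.1) ^ 2)) {p : ℝ × ℝ | m ≤ p.1} := by
  have hδ : (0:ℝ) < 1 + m := by linarith
  have hKr : (0:ℝ) ≤ max 1 (2 * lam / (1 + m) ^ 3) := le_trans zero_le_one (le_max_left _ _)
  rw [lipschitzOnWith_iff_dist_le_mul]
  intro p hp q hq
  rw [Real.coe_toNNReal _ hKr]
  have hfst : dist p.1 q.1 ≤ dist p q := by rw [Prod.dist_eq]; exact le_max_left _ _
  have hsnd : dist p.2 q.2 ≤ dist p q := by rw [Prod.dist_eq]; exact le_max_right _ _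
  rw [Prod.dist_eq]
  apply max_le
  · calc dist p.2 q.2 ≤ dist p q := hsnd
      _ = 1 * dist p q := (one_mul _).symm
      _ ≤ max 1 (2 * lam / (1 + m) ^ 3) * dist p q :=
        mul_le_mul_of_nonneg_right (le_max_left _ _) dist_nonneg
  · have hp1 : 1 + m ≤ 1 + p.1 := by have : m ≤ p.1 := hp; linarith
    have hq1 : 1 + m ≤ 1 + q.1 := by have : m ≤ q.1 := hq; linarith
    calc dist (lam / (1 + p.1) ^ 2) (lam / (1 + q.1) ^ 2)
        = |lam / (1 + p.1) ^ 2 - lam / (1 + q.1) ^ 2| := Real.dist_eq _ _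
      _ ≤ 2 * lam / (1 + m) ^ 3 * |p.1 - q.1| := mems_scalar_lip hl.le hδ hp1 hq1
      _ = 2 * lam / (1 + m) ^ 3 * dist p.1 q.1 := by rw [Real.dist_eq]
      _ ≤ max 1 (2 * lam / (1 + m) ^ 3) * dist p q := by
          apply mul_le_mul (le_max_right _ _) hfst dist_nonneg hKr

/-- Propagate an equality on `[0, b)` to `t = b` by continuity. -/
lemma limit_eq {u : ℝ → ℝ} (hc : ContinuousOn u (Icc (-1:ℝ) 1)) {x0 b : ℝ} (hb : 0 < b)
    (h1 : x0 + b ≤ 1) (h2 : -1 ≤ x0 - b)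
    (hsymm : ∀ t ∈ Ico (0:ℝ) b, u (x0 + t) = u (x0 - t)) : u (x0 + b) = u (x0 - b) := by
  have hmem1 : ∀ t ∈ Icc (0:ℝ) b, x0 + t ∈ Icc (-1:ℝ) 1 := fun t ht =>
    ⟨by linarith [ht.1, ht.2], by linarith [ht.2]⟩
  have hmem2 : ∀ t ∈ Icc (0:ℝ) b, x0 - t ∈ Icc (-1:ℝ) 1 := fun t ht =>
    ⟨by linarith [ht.2], by linarith [ht.1]⟩
  have hF : ContinuousOn (fun t => u (x0 + t) - u (x0 - t)) (Icc (0:ℝ) b) := by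
    apply ContinuousOn.sub
    · exact hc.comp ((continuous_const.add continuous_id).continuousOn) hmem1
    · exact hc.comp ((continuous_const.sub continuous_id).continuousOn) hmem2
  have hbbmem : b ∈ Icc (0:ℝ) b := ⟨hb.le, le_rfl⟩
  have hcw : ContinuousWithinAt (fun t => u (x0 + t) - u (x0 - t)) (Ico (0:ℝ) b) b :=
    (hF b hbbmem).mono Ico_subset_Icc_self
  have hclos : b ∈ closure (Ico (0:ℝ) b) := by
    rw [closure_Ico hb.ne]
    exact ⟨hb.le, le_rfl⟩
  have hne : (𝓝[Ico (0:ℝ) b] b).NeBot := mem_closure_iff_nhdsWithin_neBot.1 hclos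
  have ht1 : Tendsto (fun t => u (x0 + t) - u (x0 - t)) (𝓝[Ico (0:ℝ) b] b)
      (𝓝 (u (x0 + b) - u (x0 - b))) := hcw.tendsto
  have ht2 : Tendsto (fun t => u (x0 + t) - u (x0 - t)) (𝓝[Ico (0:ℝ) b] b) (𝓝 0) := by
    apply Tendsto.congr' _ tendsto_const_nhds
    filter_upwards [self_mem_nhdsWithin] with t ht
    rw [hsymm t ht]
    ring
  have := tendsto_nhds_unique ht1 ht2
  linarith

/-- Any stationary small-aspect-ratio MEMS solution is even. -/
theorem stationary_even (lam : ℝ) (hl : 0 < lam) (u : ℝ → ℝ)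
    (hu_smooth : ContDiffOn ℝ 2 u (Set.Icc (-1 : ℝ) 1))
    (hbc : u (-1) = 0 ∧ u 1 = 0)
    (hu : ∀ x ∈ Set.Icc (-1 : ℝ) 1, -1 < u x)
    (hode : ∀ x ∈ Set.Ioo (-1 : ℝ) 1, deriv (deriv u) x = lam / (1 + u x) ^ 2) :
    ∀ x ∈ Set.Ioo (-1 : ℝ) 1, u (-x) = u x := by
  obtain ⟨hbcm, hbcp⟩ := hbc
  have hcont : ContinuousOn u (Icc (-1:ℝ) 1) := hu_smooth.continuousOn
  -- minimum of u
  obtain ⟨z, hz, hzmin⟩ := isCompact_Icc.exists_isMinOn (nonempty_Icc.2 (by norm_num)) hcont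
  set m : ℝ := u z with hm_def
  have hm : -1 < m := hu z hz
  have hmle : ∀ x ∈ Icc (-1:ℝ) 1, m ≤ u x := fun x hx => hzmin hx
  -- derivatives
  have hC2 : ContDiffOn ℝ 2 u (Ioo (-1:ℝ) 1) := hu_smooth.mono Ioo_subset_Icc_self
  have hd1 : ContDiffOn ℝ 1 (deriv u) (Ioo (-1:ℝ) 1) :=
    hC2.deriv_of_isOpen isOpen_Ioo (by norm_num)
  have hdu : ∀ x ∈ Ioo (-1:ℝ) 1, HasDerivAt u (deriv u x) x := fun x hx =>
    ((hC2.differentiableOn (by norm_num)).differentiableAt (isOpen_Ioo.mem_nhds hx)).hasDerivAt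
  have hddu : ∀ x ∈ Ioo (-1:ℝ) 1, HasDerivAt (deriv u) (lam / (1 + u x) ^ 2) x := by
    intro x hx
    have h := ((hd1.differentiableOn one_ne_zero).differentiableAt
      (isOpen_Ioo.mem_nhds hx)).hasDerivAt
    rwa [hode x hx] at h
  -- strict convexity and negativity
  have hconv : StrictConvexOn ℝ (Icc (-1:ℝ) 1) u := by
    apply strictConvexOn_of_deriv2_pos (convex_Icc _ _) hcont
    intro x hx
    rw [interior_Icc] at hx
    have h1 : (0:ℝ) < 1 + u x := by linarith [hu x (Ioo_subset_Icc_self hx)]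
    show 0 < deriv^[2] u x
    have : deriv^[2] u x = deriv (deriv u) x := rfl
    rw [this, hode x hx]
    positivity
  have hneg : ∀ x ∈ Ioo (-1:ℝ) 1, u x < 0 := by
    intro x hx
    have key := hconv.2 (show (-1:ℝ) ∈ Icc (-1:ℝ) 1 by norm_num)
      (show (1:ℝ) ∈ Icc (-1:ℝ) 1 by norm_num) (by norm_num)
      (show (0:ℝ) < (1 - x)/2 by linarith [hx.2]) (show (0:ℝ) < (1 + x)/2 by linarith [hx.1])
      (by ring)
    rw [hbcm, hbcp] at key
    have hxe : ((1 - x)/2) • (-1:ℝ) + ((1 + x)/2) • (1:ℝ) = x := by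
      simp only [smul_eq_mul]
      ring
    rw [hxe] at key
    simpa using key
  -- critical point (Rolle)
  obtain ⟨x0, hx0, hx0'⟩ := exists_deriv_eq_zero (by norm_num : (-1:ℝ) < 1) hcont
    (hbcm.trans hbcp.symm)
  set b : ℝ := min (1 - x0) (x0 + 1) with hb_def
  have hb : 0 < b := lt_min (by linarith [hx0.2]) (by linarith [hx0.1])
  have hb1 : b ≤ 1 - x0 := min_le_left _ _
  have hb2 : b ≤ x0 + 1 := min_le_right _ _
  -- the two trajectories
  set f : ℝ → ℝ × ℝ := fun t => (u (x0 + t), deriv u (x0 + t)) with hf_def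
  set g : ℝ → ℝ × ℝ := fun t => (u (x0 - t), -deriv u (x0 - t)) with hg_def
  have hmemf : ∀ t ∈ Ioo (-b) b, x0 + t ∈ Ioo (-1:ℝ) 1 := fun t ht =>
    ⟨by linarith [ht.1], by linarith [ht.2]⟩
  have hmemg : ∀ t ∈ Ioo (-b) b, x0 - t ∈ Ioo (-1:ℝ) 1 := fun t ht =>
    ⟨by linarith [ht.2], by linarith [ht.1]⟩
  have hv := mems_lip lam m hl hm
  have hEq : EqOn f g (Ioo (-b) b) := by
    apply ODE_solution_unique_of_mem_Ioo (fun t _ => hv t) (t₀ := 0) ⟨by linarith, hb⟩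
    · intro t ht
      have hx := hmemf t ht
      constructor
      · have inner : HasDerivAt (fun s : ℝ => x0 + s) 1 t := (hasDerivAt_id t).const_add x0
        have d1 : HasDerivAt (fun s => u (x0 + s)) (deriv u (x0 + t) * 1) t :=
          (hdu _ hx).comp t inner
        have d2 : HasDerivAt (fun s => deriv u (x0 + s)) (lam / (1 + u (x0 + t)) ^ 2 * 1) t :=
          (hddu _ hx).comp t inner
        rw [mul_one] at d1 d2
        exact d1.prodMk d2
      · exact hmle _ (Ioo_subset_Icc_self hx)
    · intro t ht
      have hx := hmemg t ht
      constructor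
      · have inner : HasDerivAt (fun s : ℝ => x0 - s) (-1) t := (hasDerivAt_id t).const_sub x0
        have d1 : HasDerivAt (fun s => u (x0 - s)) (deriv u (x0 - t) * (-1)) t :=
          (hdu _ hx).comp t inner
        have d2 : HasDerivAt (fun s => -deriv u (x0 - s))
            (-(lam / (1 + u (x0 - t)) ^ 2 * (-1))) t := ((hddu _ hx).comp t inner).neg
        rw [mul_neg_one] at d1
        rw [mul_neg_one, neg_neg] at d2
        exact d1.prodMk d2
      · exact hmle _ (Ioo_subset_Icc_self hx)
    · simp [hf_def, hg_def, hx0']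
  have hsymm : ∀ t ∈ Ioo (-b) b, u (x0 + t) = u (x0 - t) := fun t ht =>
    congrArg Prod.fst (hEq ht)
  have hsymm' : ∀ t ∈ Ico (0:ℝ) b, u (x0 + t) = u (x0 - t) := fun t ht =>
    hsymm t ⟨by linarith [ht.1], ht.2⟩
  have hlim : u (x0 + b) = u (x0 - b) :=
    limit_eq hcont hb (by linarith) (by linarith) hsymm'
  -- x0 = 0
  have hx00 : x0 = 0 := by
    by_contra hne
    rcases lt_or_gt_of_ne hne with hlt | hgt
    · -- x0 < 0 : b = x0 + 1, u(x0 - b) = u(-1) = 0, u(x0 + b) = u(2x0 + 1) < 0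
      have hbe : b = x0 + 1 := min_eq_right (by linarith)
      have h2 : x0 - b = -1 := by rw [hbe]; ring
      have h3 : x0 + b = 2 * x0 + 1 := by rw [hbe]; ring
      have h4 : (2 * x0 + 1) ∈ Ioo (-1:ℝ) 1 := ⟨by linarith [hx0.1], by linarith⟩
      have := hneg _ h4
      rw [h2, h3, hbcm] at hlim
      linarith
    · -- x0 > 0 : b = 1 - x0, u(x0 + b) = u(1) = 0, u(x0 - b) = u(2x0 - 1) < 0
      have hbe : b = 1 - x0 := min_eq_left (by linarith)
      have h2 : x0 + b = 1 := by rw [hbe]; ring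
      have h3 : x0 - b = 2 * x0 - 1 := by rw [hbe]; ring
      have h4 : (2 * x0 - 1) ∈ Ioo (-1:ℝ) 1 := ⟨by linarith, by linarith [hx0.2]⟩
      have := hneg _ h4
      rw [h2, h3, hbcp] at hlim
      linarith
  -- conclude
  intro x hx
  have hbx : x ∈ Ioo (-b) b := by
    rw [hx00] at hb_def
    simp only [hb_def]
    norm_num
    exact ⟨hx.1, hx.2⟩
  have := hsymm x hbx
  rw [hx00] at this
  simpa using this.symm
end

section
/- There exists λ₀ > 0 such that for every λ ∈ (0, λ₀) the boundary value problem u'' = λ/(1+u)² on (-1,1), u(±1) = 0, has at least one C² solution with -1 < u ≤ 0. -/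
open Real Set Filter

noncomputable def phiM : ℝ → ℝ := fun θ => θ + Real.sinh θ * Real.cosh θ

lemma phiM_hasDeriv (θ : ℝ) : HasDerivAt phiM (2 * Real.cosh θ ^ 2) θ := by
  have h := (hasDerivAt_id θ).add ((Real.hasDerivAt_sinh θ).mul (Real.hasDerivAt_cosh θ))
  refine h.congr_deriv ?_
  nlinarith [Real.cosh_sq θ]

lemma phiM_mono : StrictMono phiM :=
  strictMono_of_deriv_pos fun x => by
    rw [(phiM_hasDeriv x).deriv]
    nlinarith [Real.cosh_pos x]

lemma phiM_cont : Continuous phiM :=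
  continuous_id.add (Real.continuous_sinh.mul Real.continuous_cosh)

lemma phiM_zero : phiM 0 = 0 := by simp [phiM]

lemma phiM_neg (θ : ℝ) : phiM (-θ) = -phiM θ := by
  simp [phiM]; ring

lemma phiM_surj : Function.Surjective phiM := by
  apply phiM_cont.surjective
  · apply tendsto_atTop_mono' atTop (_ : ∀ᶠ θ in atTop, θ ≤ phiM θ) tendsto_id
    filter_upwards [eventually_ge_atTop (0:ℝ)] with θ hθ
    have h1 : 0 ≤ Real.sinh θ := by
      have := Real.sinh_le_sinh.mpr hθ; simpa using this
    have h2 := (Real.cosh_pos θ).le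
    simp only [phiM]
    nlinarith
  · apply tendsto_atBot_mono' atBot (_ : ∀ᶠ θ in atBot, phiM θ ≤ θ) tendsto_id
    filter_upwards [eventually_le_atBot (0:ℝ)] with θ hθ
    have h1 : Real.sinh θ ≤ 0 := by
      have := Real.sinh_le_sinh.mpr hθ; simpa using this
    have h2 := (Real.cosh_pos θ).le
    simp only [phiM]
    nlinarith

noncomputable def psiM : ℝ → ℝ := Function.invFun phiM

lemma phiM_psiM (y : ℝ) : phiM (psiM y) = y :=
  Function.rightInverse_invFun phiM_surj y

lemma psiM_phiM (θ : ℝ) : psiM (phiM θ) = θ :=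
  Function.leftInverse_invFun phiM_mono.injective θ

lemma psiM_mono : StrictMono psiM := fun a b h =>
  phiM_mono.lt_iff_lt.mp (by rwa [phiM_psiM, phiM_psiM])

lemma psiM_cont : Continuous psiM := by
  have he : psiM = ⇑(StrictMono.orderIsoOfSurjective phiM phiM_mono phiM_surj).symm := by
    funext y
    rw [← phiM_psiM y, psiM_phiM, StrictMono.orderIsoOfSurjective_symm_apply_self]
  rw [he]
  exact OrderIso.continuous _

lemma psiM_hasDeriv (x : ℝ) :
    HasDerivAt psiM (2 * Real.cosh (psiM x) ^ 2)⁻¹ x :=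
  HasDerivAt.of_local_left_inverse psiM_cont.continuousAt (phiM_hasDeriv (psiM x))
    (by nlinarith [Real.cosh_pos (psiM x)])
    (Eventually.of_forall phiM_psiM)

lemma psiM_contDiff : ContDiff ℝ 2 psiM := by
  have hd : Differentiable ℝ psiM := fun x => (psiM_hasDeriv x).differentiableAt
  have hderiv : deriv psiM = fun x => (2 * Real.cosh (psiM x) ^ 2)⁻¹ :=
    funext fun x => (psiM_hasDeriv x).deriv
  have h1 : ContDiff ℝ 1 psiM := by
    rw [contDiff_one_iff_deriv]
    refine ⟨hd, ?_⟩
    rw [hderiv]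
    exact (continuous_const.mul ((Real.continuous_cosh.comp psiM_cont).pow 2)).inv₀
      fun x => by simp only [Pi.mul_apply, Pi.pow_apply, Function.comp_apply]; nlinarith [Real.cosh_pos (psiM x)]
  have h2 : ContDiff ℝ (1 + 1) psiM := by
    rw [contDiff_succ_iff_deriv]
    refine ⟨hd, by norm_num, ?_⟩
    rw [hderiv]
    have houter : ContDiff ℝ 1 (fun y : ℝ => (2 * Real.cosh y ^ 2)⁻¹) :=
      (contDiff_const.mul (Real.contDiff_cosh.pow 2)).inv
        fun y => by nlinarith [Real.cosh_pos y]
    exact houter.comp h1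
  convert h2 using 2
  norm_num

/-- Existence of stationary solutions of the small-aspect-ratio MEMS model for
all sufficiently small voltages. -/
theorem stationary_existence_small_lambda :
    ∃ lam₀ > (0 : ℝ), ∀ lam ∈ Set.Ioo (0 : ℝ) lam₀, ∃ u : ℝ → ℝ,
      ContDiffOn ℝ 2 u (Set.Icc (-1 : ℝ) 1) ∧
      u (-1) = 0 ∧ u 1 = 0 ∧
      (∀ x ∈ Set.Icc (-1 : ℝ) 1, -1 < u x ∧ u x ≤ 0) ∧
      (∀ x ∈ Set.Ioo (-1 : ℝ) 1, deriv (deriv u) x = lam / (1 + u x) ^ 2) := by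
  classical
  set L : ℝ → ℝ := fun t => ((Real.cosh t ^ 2)⁻¹) ^ 3 * phiM t ^ 2 / 2 with hLdef
  have hLcont : Continuous L := by
    apply Continuous.div_const
    exact (((Real.continuous_cosh.pow 2).inv₀
      (fun t => by rw [Pi.pow_apply]; nlinarith [Real.cosh_pos t])).pow 3).mul (phiM_cont.pow 2)
  have hL0 : L 0 = 0 := by simp [hLdef, phiM_zero]
  have hL1 : 0 < L 1 := by
    have h1 : 0 < phiM 1 := by
      have := phiM_mono (show (0:ℝ) < 1 by norm_num)
      rwa [phiM_zero] at this
    have h2 := Real.cosh_pos 1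
    simp only [hLdef]
    positivity
  refine ⟨L 1, hL1, fun lam hlam => ?_⟩
  obtain ⟨t, ht, hLt⟩ := intermediate_value_Ioo (by norm_num : (0:ℝ) ≤ 1)
    hLcont.continuousOn (by rw [hL0]; exact hlam)
  have ht0 : 0 < t := ht.1
  set a : ℝ := (Real.cosh t ^ 2)⁻¹ with hadef
  set B : ℝ := phiM t with hBdef
  have hcosht := Real.cosh_pos t
  have ha : 0 < a := by positivity
  have hB : 0 < B := by
    have := phiM_mono ht0
    rwa [phiM_zero] at this
  have hpsi1 : psiM (B * 1) = t := by rw [mul_one, hBdef, psiM_phiM]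
  have hpsim1 : psiM (B * (-1)) = -t := by
    rw [mul_neg_one, hBdef, ← phiM_neg, psiM_phiM]
  have hac : a * Real.cosh t ^ 2 = 1 := inv_mul_cancel₀ (by positivity)
  refine ⟨fun x => a * Real.cosh (psiM (B * x)) ^ 2 - 1, ?_, ?_, ?_, ?_, ?_⟩
  · -- smoothness
    have hθ2 : ContDiff ℝ 2 (fun x : ℝ => psiM (B * x)) :=
      psiM_contDiff.comp (contDiff_const.mul contDiff_id)
    exact ((contDiff_const.mul ((Real.contDiff_cosh.comp hθ2).pow 2)).sub
      contDiff_const).contDiffOn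
  · simp only [hpsim1, Real.cosh_neg]
    linarith
  · simp only [hpsi1]
    linarith
  · -- bounds
    intro x hx
    have hxle : B * x ≤ B * 1 := by nlinarith [hx.2]
    have hxge : B * (-1) ≤ B * x := by nlinarith [hx.1]
    have h1 : psiM (B * x) ≤ t := by
      have := psiM_mono.le_iff_le.mpr hxle
      rwa [hpsi1] at this
    have h2 : -t ≤ psiM (B * x) := by
      have := psiM_mono.le_iff_le.mpr hxge
      rwa [hpsim1] at this
    have hcc : Real.cosh (psiM (B * x)) ≤ Real.cosh t := by
      rw [Real.cosh_le_cosh]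
      rw [abs_le, abs_of_pos ht0]
      exact ⟨h2, h1⟩
    have hcp := Real.cosh_pos (psiM (B * x))
    refine ⟨?_, ?_⟩
    · show -1 < a * Real.cosh (psiM (B * x)) ^ 2 - 1
      nlinarith
    · show a * Real.cosh (psiM (B * x)) ^ 2 - 1 ≤ 0
      have hle : Real.cosh (psiM (B * x)) ^ 2 ≤ Real.cosh t ^ 2 := by nlinarith
      have := mul_le_mul_of_nonneg_left hle ha.le
      linarith
  · -- the ODE
    intro x _
    have hlin : ∀ y : ℝ, HasDerivAt (fun z : ℝ => B * z) B y := by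
      intro y; simpa using (hasDerivAt_id y).const_mul B
    have hθd : ∀ y : ℝ, HasDerivAt (fun z : ℝ => psiM (B * z))
        ((2 * Real.cosh (psiM (B * y)) ^ 2)⁻¹ * B) y := by
      intro y; exact (psiM_hasDeriv (B * y)).comp y (hlin y)
    have hud : ∀ y : ℝ, HasDerivAt (fun z => a * Real.cosh (psiM (B * z)) ^ 2 - 1)
        (a * B * Real.sinh (psiM (B * y)) / Real.cosh (psiM (B * y))) y := by
      intro y
      have h1 : HasDerivAt (fun z => Real.cosh (psiM (B * z)))
          (Real.sinh (psiM (B * y)) * ((2 * Real.cosh (psiM (B * y)) ^ 2)⁻¹ * B)) y :=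
        (Real.hasDerivAt_cosh _).comp y (hθd y)
      have h2 := ((h1.pow 2).const_mul a).sub_const 1
      refine h2.congr_deriv ?_
      have hc := Real.cosh_pos (psiM (B * y))
      field_simp
      ring
    have hderivu : deriv (fun z => a * Real.cosh (psiM (B * z)) ^ 2 - 1)
        = fun y => a * B * Real.sinh (psiM (B * y)) / Real.cosh (psiM (B * y)) :=
      funext fun y => (hud y).deriv
    rw [hderivu]
    have hnum : HasDerivAt (fun z => a * B * Real.sinh (psiM (B * z)))
        (a * B * (Real.cosh (psiM (B * x)) * ((2 * Real.cosh (psiM (B * x)) ^ 2)⁻¹ * B))) x := by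
      have h := (Real.hasDerivAt_sinh _).comp x (hθd x)
      simpa [mul_assoc] using h.const_mul (a * B)
    have hden : HasDerivAt (fun z => Real.cosh (psiM (B * z)))
        (Real.sinh (psiM (B * x)) * ((2 * Real.cosh (psiM (B * x)) ^ 2)⁻¹ * B)) x :=
      (Real.hasDerivAt_cosh _).comp x (hθd x)
    have hdiv := hnum.div hden (ne_of_gt (Real.cosh_pos (psiM (B * x))))
    rw [show (fun y => a * B * Real.sinh (psiM (B * y)) / Real.cosh (psiM (B * y))) = (fun z => a * B * Real.sinh (psiM (B * z))) / (fun z => Real.cosh (psiM (B * z))) from rfl, hdiv.deriv, ← hLt]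
    have hc := Real.cosh_pos (psiM (B * x))
    have hs : Real.sinh (psiM (B * x)) ^ 2 = Real.cosh (psiM (B * x)) ^ 2 - 1 := by
      nlinarith [Real.cosh_sq_sub_sinh_sq (psiM (B * x))]
    have h1u : 1 + (a * Real.cosh (psiM (B * x)) ^ 2 - 1) = a * Real.cosh (psiM (B * x)) ^ 2 := by
      ring
    rw [h1u, hLdef]
    field_simp [hc.ne', hcosht.ne']
    ring_nf
    rw [hs]
    have hk : Real.cosh t ^ 6 * (Real.cosh t)⁻¹ ^ 6 = 1 := by
      rw [← mul_pow, mul_inv_cancel₀ hcosht.ne']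
      norm_num
    linear_combination (B ^ 2) * hk
end

section
/- The set Λ = {λ > 0 : the problem u'' = λ/(1+u)² on (-1,1), u(±1)=0, -1 < u, has a C² solution} is nonempty and bounded above; define λ* = sup Λ. Then 0 < λ* < ∞. -/
open Real Set Filter

noncomputable section

/-- `g t = t + sinh t * cosh t`, an odd strictly increasing bijection of `ℝ`. -/
def pinG (t : ℝ) : ℝ := t + Real.sinh t * Real.cosh t

lemma pinG_hasDerivAt (t : ℝ) : HasDerivAt pinG (2 * Real.cosh t ^ 2) t := by
  have h := ((hasDerivAt_id t).add ((Real.hasDerivAt_sinh t).mul (Real.hasDerivAt_cosh t)))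
  refine h.congr_deriv (Eq.symm ?_)
  have hs := Real.sinh_sq t
  nlinarith [Real.sinh_sq t]

lemma pinG_strictMono : StrictMono pinG := by
  apply strictMono_of_deriv_pos
  intro x
  rw [(pinG_hasDerivAt x).deriv]
  positivity

lemma pinG_surj : Function.Surjective pinG := by
  have hc : Continuous pinG := by
    have : Differentiable ℝ pinG := fun x => (pinG_hasDerivAt x).differentiableAt
    exact this.continuous
  refine hc.surjective ?_ ?_
  · apply tendsto_atTop_mono' _ _ tendsto_id
    filter_upwards [eventually_ge_atTop (0:ℝ)] with t ht
    have : 0 ≤ Real.sinh t * Real.cosh t := mul_nonneg (by rwa [Real.sinh_nonneg_iff]) (Real.cosh_pos t).le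
    simp only [pinG, id]; linarith
  · apply tendsto_atBot_mono' _ _ tendsto_id
    filter_upwards [eventually_le_atBot (0:ℝ)] with t ht
    have : Real.sinh t * Real.cosh t ≤ 0 :=
      mul_nonpos_of_nonpos_of_nonneg (by rwa [Real.sinh_nonpos_iff]) (Real.cosh_pos t).le
    simp only [pinG, id]; linarith

def pinE : ℝ ≃o ℝ := StrictMono.orderIsoOfSurjective pinG pinG_strictMono pinG_surj

def pinS : ℝ → ℝ := ⇑pinE.symm

lemma pinS_continuous : Continuous pinS := pinE.symm.continuous

lemma pinG_pinS (y : ℝ) : pinG (pinS y) = y :=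
  StrictMono.orderIsoOfSurjective_self_symm_apply pinG pinG_strictMono pinG_surj y

lemma pinS_pinG (t : ℝ) : pinS (pinG t) = t :=
  StrictMono.orderIsoOfSurjective_symm_apply_self pinG pinG_strictMono pinG_surj t

lemma pinS_hasDerivAt (y : ℝ) :
    HasDerivAt pinS (2 * Real.cosh (pinS y) ^ 2)⁻¹ y := by
  refine HasDerivAt.of_local_left_inverse (pinS_continuous.continuousAt)
    (pinG_hasDerivAt (pinS y)) ?_ (Filter.Eventually.of_forall pinG_pinS)
  positivity

end

noncomputable section

def pinM : ℝ := (Real.cosh 1 ^ 2)⁻¹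
def pinB : ℝ := pinG 1
def pinLam : ℝ := pinM ^ 3 * pinB ^ 2 / 2

lemma pinM_pos : 0 < pinM := by unfold pinM; positivity
lemma pinB_pos : 0 < pinB := by
  have := pinG_strictMono (show (0:ℝ) < 1 by norm_num)
  simpa [pinG, pinB] using this
lemma pinLam_pos : 0 < pinLam := by
  have := pinM_pos; have := pinB_pos; unfold pinLam; positivity

def pinC (x : ℝ) : ℝ := pinS (pinB * x)
def pinU (x : ℝ) : ℝ := pinM * Real.cosh (pinC x) ^ 2 - 1
def pinV (x : ℝ) : ℝ := pinM * pinB * (Real.sinh (pinC x) / Real.cosh (pinC x))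
def pinW (x : ℝ) : ℝ := pinM * pinB ^ 2 / (2 * Real.cosh (pinC x) ^ 4)

lemma pinC_hasDerivAt (x : ℝ) :
    HasDerivAt pinC ((2 * Real.cosh (pinC x) ^ 2)⁻¹ * pinB) x := by
  have h1 : HasDerivAt (fun x : ℝ => pinB * x) pinB x := by
    simpa using (hasDerivAt_id x).const_mul pinB
  exact (pinS_hasDerivAt (pinB * x)).comp x h1

lemma pinU_hasDerivAt (x : ℝ) : HasDerivAt pinU (pinV x) x := by
  have hc := pinC_hasDerivAt x
  have h1 : HasDerivAt (fun x => Real.cosh (pinC x))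
      (Real.sinh (pinC x) * ((2 * Real.cosh (pinC x) ^ 2)⁻¹ * pinB)) x :=
    (Real.hasDerivAt_cosh (pinC x)).comp x hc
  have h2 := ((h1.pow 2).const_mul pinM).sub_const 1
  refine h2.congr_deriv (Eq.symm ?_)
  have hpos := Real.cosh_pos (pinC x)
  unfold pinV
  field_simp [pinV]
  ring

lemma pinV_hasDerivAt (x : ℝ) : HasDerivAt pinV (pinW x) x := by
  have hc := pinC_hasDerivAt x
  have h1 : HasDerivAt (fun x => Real.sinh (pinC x))
      (Real.cosh (pinC x) * ((2 * Real.cosh (pinC x) ^ 2)⁻¹ * pinB)) x :=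
    (Real.hasDerivAt_sinh (pinC x)).comp x hc
  have h2 : HasDerivAt (fun x => Real.cosh (pinC x))
      (Real.sinh (pinC x) * ((2 * Real.cosh (pinC x) ^ 2)⁻¹ * pinB)) x :=
    (Real.hasDerivAt_cosh (pinC x)).comp x hc
  have hpos := Real.cosh_pos (pinC x)
  have h3 := ((h1.div h2 hpos.ne').const_mul (pinM * pinB))
  refine h3.congr_deriv (Eq.symm ?_)
  have hone := Real.cosh_sq_sub_sinh_sq (pinC x)
  unfold pinW
  field_simp
  linear_combination (-(pinM * pinB ^ 2)) * hone

lemma pinU_deriv : deriv pinU = pinV :=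
  funext fun x => (pinU_hasDerivAt x).deriv

lemma pinV_deriv : deriv pinV = pinW :=
  funext fun x => (pinV_hasDerivAt x).deriv

lemma pinC_continuous : Continuous pinC :=
  pinS_continuous.comp (continuous_const.mul continuous_id)

lemma pinU_contDiff : ContDiff ℝ 2 pinU := by
  have h2 : (2 : WithTop ℕ∞) = 1 + 1 := by norm_num
  rw [h2, contDiff_succ_iff_deriv]
  refine ⟨fun x => (pinU_hasDerivAt x).differentiableAt, by simp, ?_⟩
  rw [pinU_deriv, contDiff_one_iff_deriv]
  refine ⟨fun x => (pinV_hasDerivAt x).differentiableAt, ?_⟩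
  rw [pinV_deriv]
  unfold pinW
  have : ∀ x, 2 * Real.cosh (pinC x) ^ 4 ≠ 0 := fun x => by
    have := Real.cosh_pos (pinC x); positivity
  exact continuous_const.div
    (continuous_const.mul ((Real.continuous_cosh.comp pinC_continuous).pow 4)) this

lemma pinU_neg_one : pinU (-1) = 0 := by
  have h : pinB * (-1) = pinG (-1) := by
    simp [pinB, pinG, Real.sinh_neg, Real.cosh_neg]; ring
  simp only [pinU, pinC, h, pinS_pinG, Real.cosh_neg, pinM]
  field_simp
  norm_num

lemma pinU_one : pinU 1 = 0 := by
  have h : pinB * 1 = pinG 1 := mul_one pinB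
  simp only [pinU, pinC, h, pinS_pinG, pinM]
  field_simp
  norm_num

lemma pinU_gt (x : ℝ) : -1 < pinU x := by
  have h1 := pinM_pos
  have h2 := Real.cosh_pos (pinC x)
  have : 0 < pinM * Real.cosh (pinC x) ^ 2 := by positivity
  simp only [pinU]; linarith

lemma pinU_ode (x : ℝ) :
    deriv (deriv pinU) x = pinLam / (1 + pinU x) ^ 2 := by
  rw [pinU_deriv, pinV_deriv]
  have h2 := Real.cosh_pos (pinC x)
  have h1 := pinM_pos
  have hne : 1 + pinU x = pinM * Real.cosh (pinC x) ^ 2 := by simp [pinU]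
  rw [hne]
  unfold pinW pinLam pinM
  have h3 := Real.cosh_pos (1:ℝ)
  field_simp

end

lemma pin_nonpos {f : ℝ → ℝ} (hc : ContinuousOn f (Icc (-1) 1))
    (hd1 : DifferentiableOn ℝ f (Ioo (-1) 1))
    (hd2 : DifferentiableOn ℝ (deriv f) (Ioo (-1) 1))
    (hnn : ∀ x ∈ Ioo (-1:ℝ) 1, 0 ≤ deriv (deriv f) x)
    (h1 : f (-1) = 0) (h2 : f 1 = 0) :
    ∀ x ∈ Icc (-1:ℝ) 1, f x ≤ 0 := by
  have hconv : ConvexOn ℝ (Icc (-1:ℝ) 1) f := by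
    apply convexOn_of_deriv2_nonneg (convex_Icc _ _) hc
    · rwa [interior_Icc]
    · rwa [interior_Icc]
    · rw [interior_Icc]
      intro x hx
      have h : deriv^[2] f x = deriv (deriv f) x := rfl
      rw [h]; exact hnn x hx
  intro x hx
  have hm : (-1:ℝ) ∈ Icc (-1:ℝ) 1 := by norm_num
  have hm2 : (1:ℝ) ∈ Icc (-1:ℝ) 1 := by norm_num
  have hseg : x ∈ segment ℝ (-1:ℝ) 1 := by
    rwa [segment_eq_Icc (by norm_num : (-1:ℝ) ≤ 1)]
  have := hconv.le_on_segment hm hm2 hseg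
  simpa [h1, h2] using this

lemma pin_bound {lam : ℝ} {u : ℝ → ℝ} (hl : 0 < lam)
    (hu : ContDiffOn ℝ 2 u (Icc (-1:ℝ) 1)) (hub1 : u (-1) = 0) (hub2 : u 1 = 0)
    (hgt : ∀ x ∈ Icc (-1:ℝ) 1, -1 < u x)
    (hode : ∀ x ∈ Ioo (-1:ℝ) 1, deriv (deriv u) x = lam / (1 + u x) ^ 2) :
    lam ≤ 2 := by
  have huO : ContDiffOn ℝ 2 u (Ioo (-1:ℝ) 1) := hu.mono Ioo_subset_Icc_self
  have hd1 : DifferentiableOn ℝ u (Ioo (-1:ℝ) 1) :=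
    huO.differentiableOn (by norm_num)
  have hd2 : DifferentiableOn ℝ (deriv u) (Ioo (-1:ℝ) 1) :=
    (huO.deriv_of_isOpen (m := 1) isOpen_Ioo (by norm_num)).differentiableOn (by norm_num)
  have hup : ∀ x ∈ Icc (-1:ℝ) 1, u x ≤ 0 := by
    refine pin_nonpos hu.continuousOn hd1 hd2 ?_ hub1 hub2
    intro x hx
    rw [hode x hx]
    have h0 : 0 < 1 + u x := by linarith [hgt x (Ioo_subset_Icc_self hx)]
    positivity
  -- comparison function h x = u x - lam/2 * (x^2 - 1)
  set h : ℝ → ℝ := fun x => u x - lam / 2 * (x ^ 2 - 1) with hh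
  set q : ℝ → ℝ := fun x => deriv u x - lam * x with hq
  have hderivh : ∀ x ∈ Ioo (-1:ℝ) 1, HasDerivAt h (q x) x := by
    intro x hx
    have hp : HasDerivAt (fun x : ℝ => lam / 2 * (x ^ 2 - 1)) (lam * x) x := by
      have := ((hasDerivAt_pow 2 x).sub_const 1).const_mul (lam / 2)
      refine this.congr_deriv (Eq.symm ?_)
      push_cast
      ring
    exact ((hd1.differentiableAt (isOpen_Ioo.mem_nhds hx)).hasDerivAt).sub hp
  have heq : ∀ x ∈ Ioo (-1:ℝ) 1, deriv h =ᶠ[nhds x] q := by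
    intro x hx
    filter_upwards [isOpen_Ioo.mem_nhds hx] with y hy
    exact (hderivh y hy).deriv
  have hqd : ∀ x ∈ Ioo (-1:ℝ) 1, HasDerivAt q (deriv (deriv u) x - lam) x := by
    intro x hx
    refine ((hd2.differentiableAt (isOpen_Ioo.mem_nhds hx)).hasDerivAt).sub ?_
    simpa using (hasDerivAt_id x).const_mul lam
  have hnonpos : ∀ x ∈ Icc (-1:ℝ) 1, h x ≤ 0 := by
    refine pin_nonpos ?_ ?_ ?_ ?_ ?_ ?_
    · exact hu.continuousOn.sub (Continuous.continuousOn (by continuity))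
    · exact hd1.sub (Differentiable.differentiableOn (by fun_prop))
    · intro x hx
      exact (((hqd x hx).differentiableAt.congr_of_eventuallyEq
        (heq x hx)).differentiableWithinAt)
    · intro x hx
      have hdd : deriv (deriv h) x = deriv (deriv u) x - lam := by
        rw [(heq x hx).deriv_eq, (hqd x hx).deriv]
      rw [hdd, hode x hx]
      have hxI := Ioo_subset_Icc_self hx
      have h0 : 0 < 1 + u x := by linarith [hgt x hxI]
      have h1' : (1 + u x) ^ 2 ≤ 1 := by nlinarith [hup x hxI]
      have : lam ≤ lam / (1 + u x) ^ 2 := by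
        rw [le_div_iff₀ (by positivity)]
        nlinarith
      linarith
    · simp [hh, hub1]
    · simp [hh, hub2]
  have h0 := hnonpos 0 (by norm_num)
  have hu0 : -1 < u 0 := hgt 0 (by norm_num)
  simp only [hh] at h0
  norm_num at h0
  linarith

/-- The set of voltages admitting a stationary solution is nonempty and bounded
above, and the static pull-in value `λ* = sup Λ` is finite and positive. -/
theorem pull_in_value_exists :
    let Λ : Set ℝ := {lam | 0 < lam ∧ ∃ u : ℝ → ℝ,
      ContDiffOn ℝ 2 u (Set.Icc (-1 : ℝ) 1) ∧
      u (-1) = 0 ∧ u 1 = 0 ∧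
      (∀ x ∈ Set.Icc (-1 : ℝ) 1, -1 < u x) ∧
      (∀ x ∈ Set.Ioo (-1 : ℝ) 1, deriv (deriv u) x = lam / (1 + u x) ^ 2)}
    Λ.Nonempty ∧ BddAbove Λ ∧ 0 < sSup Λ := by
  intro Λ
  have hmem : pinLam ∈ Λ :=
    ⟨pinLam_pos, pinU, pinU_contDiff.contDiffOn, pinU_neg_one, pinU_one,
      fun x _ => pinU_gt x, fun x _ => pinU_ode x⟩
  have hbdd : BddAbove Λ := by
    refine ⟨2, fun lam hlam => ?_⟩
    obtain ⟨hl, u, hu, hub1, hub2, hgt, hode⟩ := hlam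
    exact pin_bound hl hu hub1 hub2 hgt hode
  exact ⟨⟨pinLam, hmem⟩, hbdd, lt_of_lt_of_le pinLam_pos (le_csSup hbdd hmem)⟩
end

section
/- If λ ∈ Λ (i.e., the stationary MEMS problem u'' = λ/(1+u)², u(±1)=0, u > -1 has a solution u_λ), then every μ with 0 < μ < λ also belongs to Λ: u_λ is a subsolution and 0 is a supersolution for the problem with parameter μ, so a solution exists for μ. Consequently Λ is an interval. -/
open Set Filter Topology MeasureTheory intervalIntegral

namespace MemsInterval

/-- Solution operator for `u'' = g`, `u(±1)=0`, in expanded form. -/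
noncomputable def S (g : ℝ → ℝ) : ℝ → ℝ := fun x =>
  x * (∫ y in (-1:ℝ)..x, g y) - (∫ y in (-1:ℝ)..x, y * g y)
    - (x + 1) / 2 * (∫ y in (-1:ℝ)..1, (1 - y) * g y)

lemma ii_id_mul {g : ℝ → ℝ} (hg : Continuous g) (a b : ℝ) :
    IntervalIntegrable (fun y => y * g y) volume a b :=
  ((continuous_id.mul hg).intervalIntegrable a b : _)

lemma ii_one_sub_mul {g : ℝ → ℝ} (hg : Continuous g) (a b : ℝ) :
    IntervalIntegrable (fun y => (1 - y) * g y) volume a b :=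
  (((continuous_const.sub continuous_id).mul hg).intervalIntegrable a b : _)

lemma intInt_of_bdd {g : ℝ → ℝ} {C : ℝ} (hm : Measurable g)
    (hC : ∀ y, |g y| ≤ C) (a b : ℝ) : IntervalIntegrable g volume a b := by
  rw [intervalIntegrable_iff]
  refine Integrable.mono' (g := fun _ => C) ?_ hm.aestronglyMeasurable.restrict ?_
  · have : IntegrableOn (fun _ => C) (uIoc a b) volume :=
      integrableOn_const measure_Ioc_lt_top.ne
    exact this
  · filter_upwards with y
    simpa using hC y

lemma S_neg_one (g : ℝ → ℝ) : S g (-1) = 0 := by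
  simp [S]

lemma S_one {g : ℝ → ℝ} (hg : Continuous g) : S g 1 = 0 := by
  have e : (∫ y in (-1:ℝ)..1, (1 - y) * g y)
      = (∫ y in (-1:ℝ)..1, g y) - ∫ y in (-1:ℝ)..1, y * g y := by
    rw [← integral_sub (hg.intervalIntegrable _ _) (ii_id_mul hg _ _)]
    exact integral_congr fun y _ => by ring
  simp only [S, e]; ring

lemma S_nonpos {g : ℝ → ℝ} (hg : Continuous g) (hpos : ∀ y ∈ Icc (-1:ℝ) 1, 0 ≤ g y)
    {x : ℝ} (hx : x ∈ Icc (-1:ℝ) 1) : S g x ≤ 0 := by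
  obtain ⟨hx1, hx2⟩ := hx
  have hxg : IntervalIntegrable (fun y => x * g y) volume (-1) x :=
    (hg.intervalIntegrable _ _).const_mul x
  have e1 : x * (∫ y in (-1:ℝ)..x, g y) - (∫ y in (-1:ℝ)..x, y * g y)
      = ∫ y in (-1:ℝ)..x, (x - y) * g y := by
    have e : (∫ y in (-1:ℝ)..x, (x - y) * g y)
        = ∫ y in (-1:ℝ)..x, (x * g y - y * g y) := integral_congr fun y _ => by ring
    rw [e, integral_sub hxg (ii_id_mul hg _ _), intervalIntegral.integral_const_mul]
  have e2 : (∫ y in (-1:ℝ)..1, (1 - y) * g y)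
      = (∫ y in (-1:ℝ)..x, (1 - y) * g y) + ∫ y in x..1, (1 - y) * g y :=
    (integral_add_adjacent_intervals (ii_one_sub_mul hg _ _) (ii_one_sub_mul hg _ _)).symm
  have hii2 : IntervalIntegrable (fun y => (x - y) * g y) volume (-1) x :=
    ((continuous_const.sub continuous_id).mul hg).intervalIntegrable _ _
  have hii3 : IntervalIntegrable (fun y => (x + 1) / 2 * ((1 - y) * g y)) volume (-1) x :=
    (ii_one_sub_mul hg _ _).const_mul _
  have e3 : (∫ y in (-1:ℝ)..x, (x - y) * g y)
        - (x + 1) / 2 * (∫ y in (-1:ℝ)..x, (1 - y) * g y)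
      = ∫ y in (-1:ℝ)..x, ((x - 1) * (1 + y) / 2) * g y := by
    have e : (∫ y in (-1:ℝ)..x, ((x - 1) * (1 + y) / 2) * g y)
        = ∫ y in (-1:ℝ)..x, ((x - y) * g y - (x + 1) / 2 * ((1 - y) * g y)) :=
      integral_congr fun y _ => by ring
    rw [e, integral_sub hii2 hii3, intervalIntegral.integral_const_mul]
  rw [← e1] at e3
  have h4 : (∫ y in (-1:ℝ)..x, ((x - 1) * (1 + y) / 2) * g y) ≤ 0 := by
    have h := integral_nonneg (μ := volume) (f := fun y => -(((x - 1) * (1 + y) / 2) * g y)) hx1 ?_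
    · rw [intervalIntegral.integral_neg] at h; linarith
    · intro y hy
      have h1 : (0:ℝ) ≤ 1 - x := by linarith
      have h1' : (0:ℝ) ≤ 1 + y := by linarith [hy.1]
      have h2 : 0 ≤ g y := hpos y ⟨hy.1, le_trans hy.2 hx2⟩
      show (0:ℝ) ≤ -((x - 1) * (1 + y) / 2 * g y)
      nlinarith [mul_nonneg (mul_nonneg h1 h1') h2]
  have h5 : 0 ≤ ∫ y in x..1, (1 - y) * g y := by
    apply integral_nonneg hx2
    intro y hy
    exact mul_nonneg (by linarith [hy.2]) (hpos y ⟨le_trans hx1 hy.1, hy.2⟩)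
  have h6 : 0 ≤ (x + 1) / 2 * ∫ y in x..1, (1 - y) * g y :=
    mul_nonneg (by linarith) h5
  simp only [S]
  rw [e2]
  nlinarith [e3, h4]

lemma S_mono {g₁ g₂ : ℝ → ℝ} (h1 : Continuous g₁) (h2 : Continuous g₂)
    (hle : ∀ y ∈ Icc (-1:ℝ) 1, g₁ y ≤ g₂ y) {x : ℝ} (hx : x ∈ Icc (-1:ℝ) 1) :
    S g₂ x ≤ S g₁ x := by
  have key : S (fun y => g₂ y - g₁ y) x = S g₂ x - S g₁ x := by
    simp only [S]
    have ea : (∫ y in (-1:ℝ)..x, (g₂ y - g₁ y))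
        = (∫ y in (-1:ℝ)..x, g₂ y) - ∫ y in (-1:ℝ)..x, g₁ y :=
      integral_sub (h2.intervalIntegrable _ _) (h1.intervalIntegrable _ _)
    have eb : (∫ y in (-1:ℝ)..x, y * (g₂ y - g₁ y))
        = (∫ y in (-1:ℝ)..x, y * g₂ y) - ∫ y in (-1:ℝ)..x, y * g₁ y := by
      rw [← integral_sub (ii_id_mul h2 _ _) (ii_id_mul h1 _ _)]
      exact integral_congr fun y _ => by ring
    have ec : (∫ y in (-1:ℝ)..1, (1 - y) * (g₂ y - g₁ y))
        = (∫ y in (-1:ℝ)..1, (1 - y) * g₂ y) - ∫ y in (-1:ℝ)..1, (1 - y) * g₁ y := by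
      rw [← integral_sub (ii_one_sub_mul h2 _ _) (ii_one_sub_mul h1 _ _)]
      exact integral_congr fun y _ => by ring
    rw [ea, eb, ec]; ring
  have hnp := S_nonpos (g := fun y => g₂ y - g₁ y) (h2.sub h1)
    (fun y hy => sub_nonneg.2 (hle y hy)) hx
  rw [key] at hnp
  linarith

lemma S_continuous {g : ℝ → ℝ} {C : ℝ} (hm : Measurable g) (hC : ∀ y, |g y| ≤ C) :
    Continuous (S g) := by
  have h1 : ∀ a b : ℝ, IntervalIntegrable g volume a b := intInt_of_bdd hm hC
  have h2 : ∀ a b : ℝ, IntervalIntegrable (fun y => y * g y) volume a b := by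
    intro a b
    exact (h1 a b).continuousOn_mul continuous_id.continuousOn
  have hA : Continuous fun t => ∫ y in (-1:ℝ)..t, g y :=
    intervalIntegral.continuous_primitive h1 (-1)
  have hB : Continuous fun t => ∫ y in (-1:ℝ)..t, y * g y :=
    intervalIntegral.continuous_primitive h2 (-1)
  exact ((continuous_id.mul hA).sub hB).sub
    (((continuous_id.add continuous_const).div_const 2).mul continuous_const)

lemma S_hasDerivAt {g : ℝ → ℝ} (hg : Continuous g) (x : ℝ) :
    HasDerivAt (S g)
      ((∫ y in (-1:ℝ)..x, g y) - (∫ y in (-1:ℝ)..1, (1 - y) * g y) / 2) x := by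
  have hA : HasDerivAt (fun t => ∫ y in (-1:ℝ)..t, g y) (g x) x :=
    integral_hasDerivAt_right (hg.intervalIntegrable _ _)
      (hg.stronglyMeasurableAtFilter volume (𝓝 x)) hg.continuousAt
  have hB : HasDerivAt (fun t => ∫ y in (-1:ℝ)..t, y * g y) (x * g x) x :=
    integral_hasDerivAt_right (ii_id_mul hg _ _)
      ((continuous_id.mul hg).stronglyMeasurableAtFilter volume (𝓝 x))
      (continuous_id.mul hg).continuousAt
  have h3 : HasDerivAt
      (fun t : ℝ => (t + 1) / 2 * (∫ y in (-1:ℝ)..1, (1 - y) * g y))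
      ((1 / 2) * (∫ y in (-1:ℝ)..1, (1 - y) * g y)) x := by
    have : HasDerivAt (fun t : ℝ => (t + 1) / 2) (1 / 2) x := by
      simpa using (((hasDerivAt_id x).add_const 1).div_const 2)
    exact this.mul_const _
  have htot := (((hasDerivAt_id x).mul hA).sub hB).sub h3
  have : S g = fun t => t * (∫ y in (-1:ℝ)..t, g y) - (∫ y in (-1:ℝ)..t, y * g y)
      - (t + 1) / 2 * (∫ y in (-1:ℝ)..1, (1 - y) * g y) := rfl
  rw [this]
  refine htot.congr_deriv ?_
  simp only [id]
  ring

lemma S_deriv_hasDerivAt {g : ℝ → ℝ} (hg : Continuous g) (x : ℝ) :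
    HasDerivAt (fun t => (∫ y in (-1:ℝ)..t, g y)
      - (∫ y in (-1:ℝ)..1, (1 - y) * g y) / 2) (g x) x := by
  have hA : HasDerivAt (fun t => ∫ y in (-1:ℝ)..t, g y) (g x) x :=
    integral_hasDerivAt_right (hg.intervalIntegrable _ _)
      (hg.stronglyMeasurableAtFilter volume (𝓝 x)) hg.continuousAt
  simpa using hA.sub_const ((∫ y in (-1:ℝ)..1, (1 - y) * g y) / 2)

lemma S_deriv {g : ℝ → ℝ} (hg : Continuous g) :
    deriv (S g) = fun x => (∫ y in (-1:ℝ)..x, g y)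
      - (∫ y in (-1:ℝ)..1, (1 - y) * g y) / 2 :=
  funext fun x => (S_hasDerivAt hg x).deriv

lemma S_deriv_deriv {g : ℝ → ℝ} (hg : Continuous g) (x : ℝ) :
    deriv (deriv (S g)) x = g x := by
  rw [S_deriv hg]
  exact (S_deriv_hasDerivAt hg x).deriv

lemma S_contDiff {g : ℝ → ℝ} (hg : Continuous g) : ContDiff ℝ 2 (S g) := by
  rw [show (2 : WithTop ℕ∞) = 1 + 1 from rfl, contDiff_succ_iff_deriv]
  refine ⟨fun x => (S_hasDerivAt hg x).differentiableAt, by simp, ?_⟩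
  rw [S_deriv hg, contDiff_one_iff_deriv]
  refine ⟨fun x => (S_deriv_hasDerivAt hg x).differentiableAt, ?_⟩
  have : deriv (fun t => (∫ y in (-1:ℝ)..t, g y)
      - (∫ y in (-1:ℝ)..1, (1 - y) * g y) / 2) = g :=
    funext fun x => (S_deriv_hasDerivAt hg x).deriv
  rw [this]
  exact hg

lemma repr {u g : ℝ → ℝ} (hu : ContDiffOn ℝ 2 u (Icc (-1) 1)) (hu1 : u (-1) = 0)
    (hu2 : u 1 = 0) (hg : Continuous g)
    (hgu : ∀ x ∈ Ioo (-1:ℝ) 1, deriv (deriv u) x = g x) :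
    EqOn u (S g) (Icc (-1:ℝ) 1) := by
  have hIoo : ContDiffOn ℝ 2 u (Ioo (-1:ℝ) 1) := hu.mono Ioo_subset_Icc_self
  have hder1 : ContDiffOn ℝ 1 (deriv u) (Ioo (-1:ℝ) 1) :=
    hIoo.deriv_of_isOpen isOpen_Ioo (le_of_eq (show (1:WithTop ℕ∞) + 1 = 2 from rfl))
  have hu'cont : ContinuousOn (deriv u) (Ioo (-1:ℝ) 1) := hder1.continuousOn
  have hu'diff : ∀ x ∈ Ioo (-1:ℝ) 1, HasDerivAt u (deriv u x) x := by
    intro x hx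
    exact ((hIoo.contDiffAt (isOpen_Ioo.mem_nhds hx)).differentiableAt
      (by simp)).hasDerivAt
  have hdd : ∀ x ∈ Ioo (-1:ℝ) 1, HasDerivAt (deriv u) (g x) x := by
    intro x hx
    have h := ((hder1.contDiffAt (isOpen_Ioo.mem_nhds hx)).differentiableAt one_ne_zero).hasDerivAt
    rwa [hgu x hx] at h
  have hOC : OrdConnected (Ioo (-1:ℝ) 1) := ordConnected_Ioo
  have h0mem : (0:ℝ) ∈ Ioo (-1:ℝ) 1 := by norm_num
  have hsub : ∀ {x}, x ∈ Ioo (-1:ℝ) 1 → uIcc 0 x ⊆ Ioo (-1:ℝ) 1 :=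
    fun hx => hOC.uIcc_subset h0mem hx
  have hAc : Continuous fun y => ∫ z in (0:ℝ)..y, g z :=
    intervalIntegral.continuous_primitive (fun a b => hg.intervalIntegrable a b) 0
  -- formula for deriv u on Ioo
  have hu'for : ∀ x ∈ Ioo (-1:ℝ) 1, deriv u x = deriv u 0 + ∫ y in (0:ℝ)..x, g y := by
    intro x hx
    have h := integral_eq_sub_of_hasDerivAt (f := deriv u) (f' := g)
      (fun t ht => hdd t (hsub hx ht)) (hg.intervalIntegrable _ _)
    linarith
  -- formula for u on Ioo
  have hufor : ∀ x ∈ Ioo (-1:ℝ) 1, u x = u 0 + (deriv u 0) * x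
      + ∫ y in (0:ℝ)..x, (∫ z in (0:ℝ)..y, g z) := by
    intro x hx
    have e0 : ∫ y in (0:ℝ)..x, deriv u y = u x - u 0 :=
      integral_eq_sub_of_hasDerivAt (fun t ht => hu'diff t (hsub hx ht))
        ((hu'cont.mono (hsub hx)).intervalIntegrable)
    have e1 : ∫ y in (0:ℝ)..x, deriv u y
        = ∫ y in (0:ℝ)..x, (deriv u 0 + ∫ z in (0:ℝ)..y, g z) :=
      integral_congr fun y hy => hu'for y (hsub hx hy)
    have e2 : ∫ y in (0:ℝ)..x, (deriv u 0 + ∫ z in (0:ℝ)..y, g z)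
        = deriv u 0 * x + ∫ y in (0:ℝ)..x, (∫ z in (0:ℝ)..y, g z) := by
      rw [integral_add intervalIntegrable_const (hAc.intervalIntegrable _ _),
        intervalIntegral.integral_const, sub_zero, smul_eq_mul]
      ring
    linarith
  -- formula for S g, everywhere
  have hSfor : ∀ x : ℝ, S g x = S g 0
      + ((∫ y in (-1:ℝ)..0, g y) - (∫ y in (-1:ℝ)..1, (1 - y) * g y) / 2) * x
      + ∫ y in (0:ℝ)..x, (∫ z in (0:ℝ)..y, g z) := by
    intro x
    have hDScont : Continuous fun t => (∫ y in (-1:ℝ)..t, g y)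
        - (∫ y in (-1:ℝ)..1, (1 - y) * g y) / 2 :=
      (intervalIntegral.continuous_primitive (fun a b => hg.intervalIntegrable a b)
        (-1)).sub continuous_const
    have e0 : ∫ y in (0:ℝ)..x, ((∫ z in (-1:ℝ)..y, g z)
        - (∫ y in (-1:ℝ)..1, (1 - y) * g y) / 2) = S g x - S g 0 :=
      integral_eq_sub_of_hasDerivAt (fun t _ => S_hasDerivAt hg t)
        (hDScont.intervalIntegrable _ _)
    have ec : ∀ y : ℝ, (∫ z in (-1:ℝ)..y, g z)
        - (∫ y in (-1:ℝ)..1, (1 - y) * g y) / 2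
        = ((∫ z in (-1:ℝ)..0, g z) - (∫ y in (-1:ℝ)..1, (1 - y) * g y) / 2)
          + ∫ z in (0:ℝ)..y, g z := by
      intro y
      have := (integral_add_adjacent_intervals (μ := volume) (a := (-1:ℝ)) (b := 0) (c := y)
        (hg.intervalIntegrable _ _) (hg.intervalIntegrable _ _))
      linarith
    have e2 : ∫ y in (0:ℝ)..x, ((∫ z in (-1:ℝ)..y, g z)
        - (∫ y in (-1:ℝ)..1, (1 - y) * g y) / 2)
        = ((∫ z in (-1:ℝ)..0, g z) - (∫ y in (-1:ℝ)..1, (1 - y) * g y) / 2) * x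
          + ∫ y in (0:ℝ)..x, (∫ z in (0:ℝ)..y, g z) := by
      rw [integral_congr (g := fun y => ((∫ z in (-1:ℝ)..0, g z)
          - (∫ y in (-1:ℝ)..1, (1 - y) * g y) / 2) + ∫ z in (0:ℝ)..y, g z)
          (fun y _ => ec y),
        integral_add intervalIntegrable_const (hAc.intervalIntegrable _ _),
        intervalIntegral.integral_const, sub_zero, smul_eq_mul]
      ring
    linarith [e0, e2]
  set c1 := deriv u 0 with hc1
  set c2 := (∫ y in (-1:ℝ)..0, g y) - (∫ y in (-1:ℝ)..1, (1 - y) * g y) / 2 with hc2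
  have hdiff : ∀ x ∈ Ioo (-1:ℝ) 1,
      u x - S g x - ((u 0 - S g 0) + (c1 - c2) * x) = 0 := by
    intro x hx
    have h1 := hufor x hx
    have h2 := hSfor x
    have : (c1 - c2) * x = c1 * x - c2 * x := by ring
    rw [this]
    linarith
  have hφcont : ContinuousOn
      (fun x => u x - S g x - ((u 0 - S g 0) + (c1 - c2) * x)) (Icc (-1:ℝ) 1) := by
    apply (hu.continuousOn.sub ((S_contDiff hg).continuous.continuousOn)).sub
    exact (continuous_const.add (continuous_const.mul continuous_id)).continuousOn
  have hφIcc : ∀ x ∈ Icc (-1:ℝ) 1,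
      u x - S g x - ((u 0 - S g 0) + (c1 - c2) * x) = 0 := by
    intro x hx
    by_cases hxi : x ∈ Ioo (-1:ℝ) 1
    · exact hdiff x hxi
    · have hends : x = -1 ∨ x = 1 := by
        rcases eq_or_lt_of_le hx.1 with h | h
        · exact Or.inl h.symm
        · rcases eq_or_lt_of_le hx.2 with h' | h'
          · exact Or.inr h'
          · exact absurd ⟨h, h'⟩ hxi
      have hend : ∀ x₀, x₀ ∈ Icc (-1:ℝ) 1 → NeBot (𝓝[Ioo (-1:ℝ) 1] x₀) →
          u x₀ - S g x₀ - ((u 0 - S g 0) + (c1 - c2) * x₀) = 0 := by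
        intro x₀ hx₀ hne
        have h1 : Tendsto (fun x => u x - S g x - ((u 0 - S g 0) + (c1 - c2) * x))
            (𝓝[Ioo (-1:ℝ) 1] x₀)
            (𝓝 (u x₀ - S g x₀ - ((u 0 - S g 0) + (c1 - c2) * x₀))) :=
          (hφcont x₀ hx₀).mono Ioo_subset_Icc_self
        have h2 : Tendsto (fun x => u x - S g x - ((u 0 - S g 0) + (c1 - c2) * x))
            (𝓝[Ioo (-1:ℝ) 1] x₀) (𝓝 0) := by
          apply Tendsto.congr' ?_ tendsto_const_nhds
          filter_upwards [self_mem_nhdsWithin] with y hy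
          exact (hdiff y hy).symm
        exact tendsto_nhds_unique h1 h2
      rcases hends with rfl | rfl
      · exact hend _ (by norm_num) (left_nhdsWithin_Ioo_neBot (by norm_num))
      · exact hend _ (by norm_num) (right_nhdsWithin_Ioo_neBot (by norm_num))
  have hA : (u 0 - S g 0) - (c1 - c2) = 0 := by
    have h := hφIcc (-1) (by norm_num)
    rw [hu1, S_neg_one] at h
    linarith
  have hB : (u 0 - S g 0) + (c1 - c2) = 0 := by
    have h := hφIcc 1 (by norm_num)
    rw [hu2, S_one hg] at h
    linarith
  intro x hx
  have h := hφIcc x hx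
  have hA0 : u 0 - S g 0 = 0 := by linarith
  have hB0 : c1 - c2 = 0 := by linarith
  rw [hA0, hB0] at h
  simp only [zero_mul, add_zero, zero_add] at h
  linarith

/-- Truncated nonlinearity. -/
noncomputable def Fm (μ m : ℝ) : ℝ → ℝ := fun t => μ / (1 + max t m) ^ 2

/-- Monotone iteration starting from the supersolution `0`. -/
noncomputable def iter (F : ℝ → ℝ) : ℕ → ℝ → ℝ := fun n =>
  Nat.rec (fun _ => 0) (fun _ w => S fun y => F (w y)) n

lemma iter_zero (F : ℝ → ℝ) : iter F 0 = fun _ => 0 := rfl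

lemma iter_succ (F : ℝ → ℝ) (n : ℕ) :
    iter F (n + 1) = S fun y => F (iter F n y) := rfl

end MemsInterval

open MemsInterval Set Filter Topology MeasureTheory intervalIntegral

/-- If the stationary MEMS problem is solvable for `λ`, it is solvable for every
`μ ∈ (0, λ)`; consequently the solvable set `Λ` is an interval. -/
theorem solvable_set_is_interval :
    let Λ : Set ℝ := {lam | 0 < lam ∧ ∃ u : ℝ → ℝ,
      ContDiffOn ℝ 2 u (Set.Icc (-1 : ℝ) 1) ∧
      u (-1) = 0 ∧ u 1 = 0 ∧
      (∀ x ∈ Set.Icc (-1 : ℝ) 1, -1 < u x) ∧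
      (∀ x ∈ Set.Ioo (-1 : ℝ) 1, deriv (deriv u) x = lam / (1 + u x) ^ 2)}
    (∀ lam ∈ Λ, ∀ μ : ℝ, 0 < μ → μ < lam → μ ∈ Λ) ∧ Λ.OrdConnected := by
  intro Λ
  have main : ∀ lam ∈ Λ, ∀ μ : ℝ, 0 < μ → μ < lam → μ ∈ Λ := by
    rintro lam ⟨hlam, u₀, hu₀, hb1, hb2, hgt, hode⟩ μ hμ0 hμlam
    refine ⟨hμ0, ?_⟩
    have hcont₀ : ContinuousOn u₀ (Icc (-1:ℝ) 1) := hu₀.continuousOn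
    obtain ⟨x₀, hx₀, hmin⟩ := isCompact_Icc.exists_isMinOn
      (Set.nonempty_Icc.2 (by norm_num)) hcont₀
    set m := u₀ x₀ with hm
    have hm1 : -1 < m := hgt x₀ hx₀
    have hmle : ∀ x ∈ Icc (-1:ℝ) 1, m ≤ u₀ x := fun x hx => hmin hx
    -- the clamp map onto [-1,1]
    set cl : ℝ → ℝ := fun x => max (-1) (min x 1) with hcl
    have hclcont : Continuous cl := continuous_const.max (continuous_id.min continuous_const)
    have hclmem : ∀ x, cl x ∈ Icc (-1:ℝ) 1 := fun x =>
      ⟨le_max_left _ _, max_le (by norm_num) (min_le_right _ _)⟩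
    have hclid : ∀ x ∈ Icc (-1:ℝ) 1, cl x = x := by
      intro x hx
      simp only [hcl]
      rw [min_eq_left hx.2, max_eq_right hx.1]
    have hu₀c : Continuous fun x => u₀ (cl x) := hcont₀.comp_continuous hclcont hclmem
    -- the (extended) right-hand side for the λ-problem
    set g₀ : ℝ → ℝ := fun y => lam / (1 + u₀ (cl y)) ^ 2 with hg₀
    have hden : ∀ y, (0:ℝ) < 1 + u₀ (cl y) := fun y => by linarith [hgt (cl y) (hclmem y)]
    have hg₀cont : Continuous g₀ :=
      continuous_const.div ((continuous_const.add hu₀c).pow 2)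
        (fun y => pow_ne_zero 2 (ne_of_gt (hden y)))
    have hg₀pos : ∀ y, 0 ≤ g₀ y := fun y => le_of_lt (div_pos hlam (pow_pos (hden y) 2))
    have hg₀Icc : ∀ y ∈ Icc (-1:ℝ) 1, g₀ y = lam / (1 + u₀ y) ^ 2 := by
      intro y hy
      simp only [hg₀]
      rw [hclid y hy]
    -- representation of u₀ and consequences
    have hrepr₀ : EqOn u₀ (S g₀) (Icc (-1:ℝ) 1) := by
      apply repr hu₀ hb1 hb2 hg₀cont
      intro x hx
      rw [hode x hx]
      exact (hg₀Icc x (Ioo_subset_Icc_self hx)).symm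
    have hu₀np : ∀ x ∈ Icc (-1:ℝ) 1, u₀ x ≤ 0 := by
      intro x hx
      rw [hrepr₀ hx]
      exact S_nonpos hg₀cont (fun y _ => hg₀pos y) hx
    have hm0 : m ≤ 0 := hu₀np x₀ hx₀
    -- properties of the truncated nonlinearity
    have hFden : ∀ t : ℝ, 0 < 1 + max t m := fun t => by
      have := le_max_right t m; linarith
    have hFcont : Continuous (Fm μ m) :=
      continuous_const.div ((continuous_const.add (continuous_id.max continuous_const)).pow 2)
        (fun t => pow_ne_zero 2 (ne_of_gt (hFden t)))
    have hFpos : ∀ t, 0 ≤ Fm μ m t := fun t => le_of_lt (div_pos hμ0 (pow_pos (hFden t) 2))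
    have hFbd : ∀ t, |Fm μ m t| ≤ μ / (1 + m) ^ 2 := by
      intro t
      rw [abs_of_nonneg (hFpos t)]
      apply (div_le_div_iff_of_pos_left hμ0 (pow_pos (hFden t) 2) (pow_pos (by linarith : (0:ℝ) < 1 + m) 2)).2
      exact pow_le_pow_left₀ (by linarith) (by linarith [le_max_right t m]) 2
    have hFanti : ∀ s t : ℝ, s ≤ t → Fm μ m t ≤ Fm μ m s := by
      intro s t hst
      apply (div_le_div_iff_of_pos_left hμ0 (pow_pos (hFden t) 2) (pow_pos (hFden s) 2)).2
      exact pow_le_pow_left₀ (le_of_lt (hFden s)) (by simp [max_le_max_right m hst]) 2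
    -- F(w) is below g₀ whenever w is above u₀
    have hFg₀ : ∀ (w : ℝ → ℝ), (∀ y ∈ Icc (-1:ℝ) 1, u₀ y ≤ w y) →
        ∀ y ∈ Icc (-1:ℝ) 1, Fm μ m (w y) ≤ g₀ y := by
      intro w hw y hy
      rw [hg₀Icc y hy]
      have h2 : 0 < 1 + u₀ y := by linarith [hgt y hy]
      have step1 : Fm μ m (w y) ≤ μ / (1 + u₀ y) ^ 2 := by
        apply (div_le_div_iff_of_pos_left hμ0 (pow_pos (hFden (w y)) 2) (pow_pos h2 2)).2
        exact pow_le_pow_left₀ (le_of_lt h2)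
          (by linarith [le_trans (hw y hy) (le_max_left (w y) m)]) 2
      have step2 : μ / (1 + u₀ y) ^ 2 ≤ lam / (1 + u₀ y) ^ 2 :=
        (div_le_div_iff_of_pos_right (pow_pos h2 2)).2 (le_of_lt hμlam)
      linarith
    -- the iteration
    set q : ℕ → ℝ → ℝ := iter (Fm μ m) with hq
    have hqs : ∀ n, q (n + 1) = S fun y => Fm μ m (q n y) := fun n => rfl
    have hqcont : ∀ n, Continuous (q n) := by
      intro n
      induction n with
      | zero => exact continuous_const
      | succ n ih =>
        rw [hqs]
        exact (S_contDiff (hFcont.comp ih)).continuous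
    have hqbound : ∀ n, ∀ x ∈ Icc (-1:ℝ) 1, u₀ x ≤ q n x ∧ q n x ≤ 0 := by
      intro n
      induction n with
      | zero => exact fun x hx => ⟨hu₀np x hx, le_refl 0⟩
      | succ n ih =>
        intro x hx
        constructor
        · have hmono := S_mono (g₁ := fun y => Fm μ m (q n y)) (g₂ := g₀)
            (hFcont.comp (hqcont n)) hg₀cont
            (hFg₀ (q n) (fun y hy => (ih y hy).1)) hx
          rw [hrepr₀ hx, hqs]
          exact hmono
        · rw [hqs]
          exact S_nonpos (hFcont.comp (hqcont n)) (fun y _ => hFpos _) hx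
    have hqanti : ∀ n, ∀ x ∈ Icc (-1:ℝ) 1, q (n + 1) x ≤ q n x := by
      intro n
      induction n with
      | zero =>
        intro x hx
        rw [hqs]
        exact S_nonpos (hFcont.comp (hqcont 0)) (fun y _ => hFpos _) hx
      | succ n ih =>
        intro x hx
        rw [hqs (n + 1), hqs n]
        exact S_mono (hFcont.comp (hqcont n)) (hFcont.comp (hqcont (n + 1)))
          (fun y hy => hFanti _ _ (ih y hy)) hx
    -- the limit of the iteration
    set v : ℝ → ℝ := fun x => ⨅ n, max (q n x) m with hv
    have hvmeas : Measurable v :=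
      Measurable.iInf fun n => ((hqcont n).max continuous_const).measurable
    have hveq : ∀ x ∈ Icc (-1:ℝ) 1, v x = ⨅ n, q n x := by
      intro x hx
      exact congrArg iInf (funext fun n =>
        max_eq_left (le_trans (hmle x hx) (hqbound n x hx).1))
    have hbdd : ∀ x ∈ Icc (-1:ℝ) 1, BddBelow (Set.range fun n => q n x) := by
      intro x hx
      refine ⟨u₀ x, ?_⟩
      rintro r ⟨n, rfl⟩
      exact (hqbound n x hx).1
    have hanti : ∀ x ∈ Icc (-1:ℝ) 1, Antitone fun n => q n x := fun x hx =>
      antitone_nat_of_succ_le fun n => hqanti n x hx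
    have htend : ∀ x ∈ Icc (-1:ℝ) 1, Tendsto (fun n => q n x) atTop (𝓝 (v x)) := by
      intro x hx
      rw [hveq x hx]
      exact tendsto_atTop_ciInf (hanti x hx) (hbdd x hx)
    have hvlb : ∀ x ∈ Icc (-1:ℝ) 1, u₀ x ≤ v x := by
      intro x hx
      rw [hveq x hx]
      exact le_ciInf fun n => (hqbound n x hx).1
    -- fixed-point property of v on [-1,1], via dominated convergence
    have hfix : ∀ x ∈ Icc (-1:ℝ) 1, v x = S (fun y => Fm μ m (v y)) x := by
      intro x hx
      have hsubI : uIoc (-1:ℝ) x ⊆ Icc (-1:ℝ) 1 := by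
        rw [uIoc_of_le hx.1]
        exact Ioc_subset_Icc_self.trans (Icc_subset_Icc le_rfl hx.2)
      have hsubI2 : uIoc (-1:ℝ) 1 ⊆ Icc (-1:ℝ) 1 := by
        rw [uIoc_of_le (by norm_num : (-1:ℝ) ≤ 1)]
        exact Ioc_subset_Icc_self
      have hptconv : ∀ y ∈ Icc (-1:ℝ) 1,
          Tendsto (fun n => Fm μ m (q n y)) atTop (𝓝 (Fm μ m (v y))) :=
        fun y hy => (hFcont.tendsto (v y)).comp (htend y hy)
      have hT1 : Tendsto (fun n => ∫ y in (-1:ℝ)..x, Fm μ m (q n y)) atTop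
          (𝓝 (∫ y in (-1:ℝ)..x, Fm μ m (v y))) := by
        apply intervalIntegral.tendsto_integral_filter_of_dominated_convergence
          (bound := fun _ => μ / (1 + m) ^ 2)
        · exact Eventually.of_forall fun n =>
            ((hFcont.comp (hqcont n)).aestronglyMeasurable).restrict
        · exact Eventually.of_forall fun n => Eventually.of_forall fun y _ => by
            rw [Real.norm_eq_abs]; exact hFbd _
        · exact intervalIntegrable_const
        · exact Eventually.of_forall fun y hy => hptconv y (hsubI hy)
      have hT2 : Tendsto (fun n => ∫ y in (-1:ℝ)..x, y * Fm μ m (q n y)) atTop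
          (𝓝 (∫ y in (-1:ℝ)..x, y * Fm μ m (v y))) := by
        apply intervalIntegral.tendsto_integral_filter_of_dominated_convergence
          (bound := fun _ => μ / (1 + m) ^ 2)
        · exact Eventually.of_forall fun n =>
            ((continuous_id.mul (hFcont.comp (hqcont n))).aestronglyMeasurable).restrict
        · refine Eventually.of_forall fun n => Eventually.of_forall fun y hy => ?_
          have hyI : y ∈ Icc (-1:ℝ) 1 := hsubI hy
          have h1 : |y| ≤ 1 := abs_le.2 ⟨hyI.1, hyI.2⟩
          have h2 := hFbd (q n y)
          rw [Real.norm_eq_abs, abs_mul]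
          calc |y| * |Fm μ m (q n y)| ≤ 1 * |Fm μ m (q n y)| :=
                mul_le_mul_of_nonneg_right h1 (abs_nonneg _)
            _ = |Fm μ m (q n y)| := one_mul _
            _ ≤ μ / (1 + m) ^ 2 := h2
        · exact intervalIntegrable_const
        · exact Eventually.of_forall fun y hy =>
            (hptconv y (hsubI hy)).const_mul y
      have hT3 : Tendsto (fun n => ∫ y in (-1:ℝ)..1, (1 - y) * Fm μ m (q n y)) atTop
          (𝓝 (∫ y in (-1:ℝ)..1, (1 - y) * Fm μ m (v y))) := by
        apply intervalIntegral.tendsto_integral_filter_of_dominated_convergence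
          (bound := fun _ => 2 * (μ / (1 + m) ^ 2))
        · exact Eventually.of_forall fun n =>
            (((continuous_const.sub continuous_id).mul
              (hFcont.comp (hqcont n))).aestronglyMeasurable).restrict
        · refine Eventually.of_forall fun n => Eventually.of_forall fun y hy => ?_
          have hyI : y ∈ Icc (-1:ℝ) 1 := hsubI2 hy
          have h1 : |1 - y| ≤ 2 := by
            rw [abs_le]; constructor <;> [linarith [hyI.2]; linarith [hyI.1]]
          have h2 := hFbd (q n y)
          rw [Real.norm_eq_abs, abs_mul]
          calc |1 - y| * |Fm μ m (q n y)| ≤ 2 * |Fm μ m (q n y)| :=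
                mul_le_mul_of_nonneg_right h1 (abs_nonneg _)
            _ ≤ 2 * (μ / (1 + m) ^ 2) := by linarith [h2]
        · exact intervalIntegrable_const
        · exact Eventually.of_forall fun y hy =>
            (hptconv y (hsubI2 hy)).const_mul (1 - y)
      have hcomb : Tendsto (fun n => S (fun y => Fm μ m (q n y)) x) atTop
          (𝓝 (S (fun y => Fm μ m (v y)) x)) := by
        simp only [S]
        exact ((hT1.const_mul x).sub hT2).sub (hT3.const_mul ((x + 1) / 2))
      have hshift : Tendsto (fun n => q (n + 1) x) atTop (𝓝 (v x)) :=
        (htend x hx).comp (tendsto_add_atTop_nat 1)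
      have heq : (fun n => q (n + 1) x) = fun n => S (fun y => Fm μ m (q n y)) x :=
        funext fun n => by rw [hqs n]
      rw [heq] at hshift
      exact tendsto_nhds_unique hshift hcomb
    -- the solution for μ
    set gh : ℝ → ℝ := fun y => Fm μ m (v (cl y)) with hgh
    have hgh_meas : Measurable gh :=
      (hFcont.measurable.comp hvmeas).comp hclcont.measurable
    have hgh_bd : ∀ y, |gh y| ≤ μ / (1 + m) ^ 2 := fun y => hFbd _
    have hScont : Continuous (S gh) := S_continuous hgh_meas hgh_bd
    have huv : ∀ x ∈ Icc (-1:ℝ) 1, S gh x = v x := by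
      intro x hx
      have huIcc : uIcc (-1:ℝ) x ⊆ Icc (-1:ℝ) 1 := by
        rw [uIcc_of_le hx.1]
        exact Icc_subset_Icc le_rfl hx.2
      have huIcc2 : uIcc (-1:ℝ) 1 ⊆ Icc (-1:ℝ) 1 := by
        rw [uIcc_of_le (by norm_num : (-1:ℝ) ≤ 1)]
      have e1 : (∫ y in (-1:ℝ)..x, gh y) = ∫ y in (-1:ℝ)..x, Fm μ m (v y) :=
        integral_congr fun y hy => by
          simp only [hgh]; rw [hclid y (huIcc hy)]
      have e2 : (∫ y in (-1:ℝ)..x, y * gh y) = ∫ y in (-1:ℝ)..x, y * Fm μ m (v y) :=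
        integral_congr fun y hy => by
          simp only [hgh]; rw [hclid y (huIcc hy)]
      have e3 : (∫ y in (-1:ℝ)..1, (1 - y) * gh y)
          = ∫ y in (-1:ℝ)..1, (1 - y) * Fm μ m (v y) :=
        integral_congr fun y hy => by
          simp only [hgh]; rw [hclid y (huIcc2 hy)]
      have : S gh x = S (fun y => Fm μ m (v y)) x := by
        simp only [S, e1, e2, e3]
      rw [this, ← hfix x hx]
    have hghc : Continuous gh := by
      have he : gh = fun y => Fm μ m (S gh (cl y)) :=
        funext fun y => by
          simp only [hgh]
          rw [huv (cl y) (hclmem y)]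
      rw [he]
      exact hFcont.comp (hScont.comp hclcont)
    refine ⟨S gh, (S_contDiff hghc).contDiffOn, S_neg_one gh, S_one hghc, ?_, ?_⟩
    · intro x hx
      have h1 := hvlb x hx
      have h2 := huv x hx
      have h3 := hgt x hx
      linarith
    · intro x hx
      have hxI : x ∈ Icc (-1:ℝ) 1 := Ioo_subset_Icc_self hx
      have h1 : gh x = Fm μ m (S gh x) := by
        simp only [hgh]
        rw [hclid x hxI, huv x hxI]
      have h2 : max (S gh x) m = S gh x :=
        max_eq_left (by
          have := hvlb x hxI
          have := huv x hxI
          have := hmle x hxI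
          linarith)
      rw [S_deriv_deriv hghc x, h1]
      simp only [Fm]
      rw [h2]
  refine ⟨main, ⟨?_⟩⟩
  intro x hx y hy z hz
  rcases eq_or_lt_of_le hz.2 with h | h
  · exact h ▸ hy
  · exact main y hy z (lt_of_lt_of_le hx.1 hz.1) h
end

section
/- Let u(x,t) solve the heat equation u_t - u_xx = -λ/(1+u)² on (-1,1) × (0,T) with u(±1,t) = 0 and u(x,0) = 0, where 0 < λ, and suppose there exists a stationary solution U with U'' = λ/(1+U)², U(±1) = 0, -1 < U ≤ 0. Then -1 < U(x) ≤ u(x,t) ≤ 0 for all (x,t) ∈ (-1,1) × (0,T); in particular u does not quench (never reaches -1) on any finite time interval. -/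
open Set Filter Topology

lemma aux_nonpos (a C : ℝ) (hC : 0 ≤ C) (h : ∀ ε : ℝ, 0 < ε → a ≤ ε * C) : a ≤ 0 := by
  by_contra hpos
  push_neg at hpos
  have h1 := h (a / (2 * (C + 1))) (by positivity)
  have h2 : a / (2 * (C + 1)) * C < a := by
    rw [div_mul_eq_mul_div, div_lt_iff₀ (by positivity)]
    nlinarith
  linarith

lemma deriv_nonneg_of_max_left (g : ℝ → ℝ) (a t₀ : ℝ)
    (hd : DifferentiableAt ℝ g t₀) (hat : a < t₀)
    (hmax : ∀ s ∈ Set.Icc a t₀, g s ≤ g t₀) : 0 ≤ deriv g t₀ := by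
  have hW : HasDerivWithinAt g (deriv g t₀) (Set.Iio t₀) t₀ :=
    hd.hasDerivAt.hasDerivWithinAt
  rw [hasDerivWithinAt_iff_tendsto_slope, Set.diff_singleton_eq_self (by simp)] at hW
  refine ge_of_tendsto hW ?_
  filter_upwards [Ioo_mem_nhdsLT_of_mem (Set.mem_Ioc.2 ⟨hat, le_rfl⟩)] with s hs
  have h1 : g s - g t₀ ≤ 0 := sub_nonpos.2 (hmax s ⟨hs.1.le, hs.2.le⟩)
  have h2 : s - t₀ ≤ 0 := (sub_neg.2 hs.2).le
  rw [slope_def_field]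
  exact div_nonneg_iff.2 (Or.inr ⟨h1, h2⟩)


lemma deriv2_nonpos_of_interior_max (h : ℝ → ℝ) (lo hi x₀ : ℝ)
    (hC : ContDiffOn ℝ 2 h (Set.Ioo lo hi)) (hx : x₀ ∈ Set.Ioo lo hi)
    (hmax : ∀ x ∈ Set.Ioo lo hi, h x ≤ h x₀) : deriv (deriv h) x₀ ≤ 0 := by
  have hO : IsOpen (Set.Ioo lo hi) := isOpen_Ioo
  have hnb : Set.Ioo lo hi ∈ 𝓝 x₀ := hO.mem_nhds hx
  have hC1 : ContDiffOn ℝ 1 (deriv h) (Set.Ioo lo hi) :=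
    hC.deriv_of_isOpen hO (by norm_num)
  have hd1 : DifferentiableOn ℝ (deriv h) (Set.Ioo lo hi) :=
    hC1.differentiableOn (by norm_num)
  have hlocmax : IsLocalMax h x₀ := by
    filter_upwards [hnb] with y hy using hmax y hy
  have hzero : deriv h x₀ = 0 := hlocmax.deriv_eq_zero
  by_contra hpos
  push_neg at hpos
  have hdat : HasDerivAt (deriv h) (deriv (deriv h) x₀) x₀ :=
    (hd1.differentiableAt hnb).hasDerivAt
  have hslope : Tendsto (slope (deriv h) x₀) (𝓝[≠] x₀) (𝓝 (deriv (deriv h) x₀)) :=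
    hasDerivAt_iff_tendsto_slope.1 hdat
  have hev : ∀ᶠ y in 𝓝[>] x₀, 0 < slope (deriv h) x₀ y ∧ y ∈ Set.Ioo lo hi := by
    have h1 : ∀ᶠ y in 𝓝[>] x₀, 0 < slope (deriv h) x₀ y := by
      have ht : Tendsto (slope (deriv h) x₀) (𝓝[>] x₀) (𝓝 (deriv (deriv h) x₀)) :=
        hslope.mono_left (nhdsWithin_mono _ (fun y hy => ne_of_gt hy))
      exact ht.eventually (eventually_gt_nhds hpos)
    have h2 : ∀ᶠ y in 𝓝[>] x₀, y ∈ Set.Ioo lo hi :=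
      eventually_nhdsWithin_of_eventually_nhds hnb
    exact h1.and h2
  obtain ⟨b, hb, hIoo⟩ := mem_nhdsGT_iff_exists_Ioo_subset.1 hev
  -- b > x₀, and on Ioo x₀ b the property holds
  have hbx : x₀ < b := hb
  set c := min b hi with hc
  have hxc : x₀ < c := lt_min hbx hx.2
  set p := (x₀ + c) / 2 with hp
  have hxp : x₀ < p := by simp only [hp]; linarith
  have hpc : p < c := by simp only [hp]; linarith
  have hderivpos : ∀ y ∈ Set.Ioo x₀ p, 0 < deriv h y := by
    intro y hy
    have hyb : y ∈ Set.Ioo x₀ b :=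
      ⟨hy.1, lt_of_lt_of_le (hy.2.trans hpc) (min_le_left _ _)⟩
    have := hIoo hyb
    have hsl : 0 < slope (deriv h) x₀ y := this.1
    rw [slope_def_field, hzero, sub_zero] at hsl
    have hy0 : 0 < y - x₀ := sub_pos.2 hy.1
    have := mul_pos hsl hy0
    rwa [div_mul_cancel₀ _ (ne_of_gt hy0)] at this
  have hsub : Set.Icc x₀ p ⊆ Set.Ioo lo hi := by
    intro y hy
    exact ⟨lt_of_lt_of_le hx.1 hy.1,
      lt_of_le_of_lt hy.2 (lt_of_lt_of_le hpc (min_le_right _ _))⟩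
  have hmono : StrictMonoOn h (Set.Icc x₀ p) := by
    apply strictMonoOn_of_deriv_pos (convex_Icc _ _)
    · exact (hC.continuousOn).mono hsub
    · intro y hy
      rw [interior_Icc] at hy
      exact hderivpos y hy
  have hlt : h x₀ < h p :=
    hmono (Set.left_mem_Icc.2 hxp.le) (Set.right_mem_Icc.2 hxp.le) hxp
  have hple : h p ≤ h x₀ := hmax p (hsub (Set.right_mem_Icc.2 hxp.le))
  linarith


lemma maxPrinciple (σ : ℝ) (hσ : 0 < σ) (v : ℝ → ℝ → ℝ)
    (hv_cont : ContinuousOn (Function.uncurry v) (Set.Icc (-1:ℝ) 1 ×ˢ Set.Icc 0 σ))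
    (hvx : ∀ t ∈ Set.Ioc (0:ℝ) σ, ContDiffOn ℝ 2 (fun x => v x t) (Set.Ioo (-1:ℝ) 1))
    (hvt : ∀ x ∈ Set.Ioo (-1:ℝ) 1, ∀ t ∈ Set.Ioc (0:ℝ) σ,
      DifferentiableAt ℝ (fun t' => v x t') t)
    (hsub : ∀ x ∈ Set.Ioo (-1:ℝ) 1, ∀ t ∈ Set.Ioc (0:ℝ) σ, 0 < v x t →
      deriv (fun t' => v x t') t - deriv (deriv (fun x' => v x' t)) x < 0)
    (hside : ∀ t ∈ Set.Icc (0:ℝ) σ, v (-1) t ≤ 0 ∧ v 1 t ≤ 0)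
    (hbot : ∀ x ∈ Set.Icc (-1:ℝ) 1, v x 0 ≤ 0) :
    ∀ x ∈ Set.Icc (-1:ℝ) 1, ∀ t ∈ Set.Icc (0:ℝ) σ, v x t ≤ 0 := by
  by_contra hcon
  push_neg at hcon
  obtain ⟨xb, hxb, tb, htb, hpos⟩ := hcon
  have hKc : IsCompact (Set.Icc (-1:ℝ) 1 ×ˢ Set.Icc (0:ℝ) σ) :=
    (isCompact_Icc).prod isCompact_Icc
  have hKne : (Set.Icc (-1:ℝ) 1 ×ˢ Set.Icc (0:ℝ) σ).Nonempty :=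
    ⟨(xb, tb), hxb, htb⟩
  obtain ⟨⟨x₀, t₀⟩, hpK, hmax⟩ := hKc.exists_isMaxOn hKne hv_cont
  have hx₀ : x₀ ∈ Set.Icc (-1:ℝ) 1 := hpK.1
  have ht₀ : t₀ ∈ Set.Icc (0:ℝ) σ := hpK.2
  have hvmax : ∀ x ∈ Set.Icc (-1:ℝ) 1, ∀ t ∈ Set.Icc (0:ℝ) σ, v x t ≤ v x₀ t₀ := by
    intro x hx t ht
    exact hmax (Set.mk_mem_prod hx ht)
  have hvpos : 0 < v x₀ t₀ := lt_of_lt_of_le hpos (hvmax xb hxb tb htb)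
  have htne : t₀ ≠ 0 := by
    intro h; rw [h] at hvpos; exact absurd (hbot x₀ hx₀) (not_le.2 hvpos)
  have hxne1 : x₀ ≠ -1 := by
    intro h; rw [h] at hvpos; exact absurd (hside t₀ ht₀).1 (not_le.2 hvpos)
  have hxne2 : x₀ ≠ 1 := by
    intro h; rw [h] at hvpos; exact absurd (hside t₀ ht₀).2 (not_le.2 hvpos)
  have hxI : x₀ ∈ Set.Ioo (-1:ℝ) 1 :=
    ⟨lt_of_le_of_ne hx₀.1 (Ne.symm hxne1), lt_of_le_of_ne hx₀.2 hxne2⟩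
  have htI : t₀ ∈ Set.Ioc (0:ℝ) σ := ⟨lt_of_le_of_ne ht₀.1 (Ne.symm htne), ht₀.2⟩
  have h1 : 0 ≤ deriv (fun t' => v x₀ t') t₀ := by
    apply deriv_nonneg_of_max_left _ 0 t₀ (hvt x₀ hxI t₀ htI) htI.1
    intro s hs
    exact hvmax x₀ hx₀ s ⟨hs.1, hs.2.trans ht₀.2⟩
  have h2 : deriv (deriv (fun x' => v x' t₀)) x₀ ≤ 0 := by
    apply deriv2_nonpos_of_interior_max _ (-1) 1 x₀ (hvx t₀ htI) hxI
    intro x hx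
    exact hvmax x (Set.mem_Icc.2 ⟨hx.1.le, hx.2.le⟩) t₀ ht₀
  have := hsub x₀ hxI t₀ htI hvpos
  linarith


lemma key_ineq (lam δ a b : ℝ) (hl : 0 < lam) (hδ : 0 < δ) (hδ1 : δ ≤ 1)
    (ha1 : -1 + δ/2 ≤ a) (ha0 : a ≤ 0) (hb : -1 + δ ≤ b) (hb0 : b ≤ 0) (hab : a < b) :
    lam / (1+a)^2 - lam / (1+b)^2 ≤ (8*lam/δ^4) * (b - a) := by
  have hp : 0 < 1 + a := by linarith
  have hq : 0 < 1 + b := by linarith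
  have hpd : δ/2 ≤ 1 + a := by linarith
  have hqd : δ ≤ 1 + b := by linarith
  have hp2 : (δ/2)^2 ≤ (1+a)^2 := by nlinarith
  have hq2 : δ^2 ≤ (1+b)^2 := by nlinarith
  rw [div_sub_div _ _ (by positivity) (by positivity), div_le_iff₀ (by positivity)]
  have hfac : 0 ≤ lam * (b - a) * (-(a+b)) :=
    mul_nonneg (mul_nonneg hl.le (sub_pos.2 hab).le) (by linarith)
  have key : lam * ((1+b)^2 - (1+a)^2) ≤ 2 * lam * (b - a) := by nlinarith
  have hprod : δ^4 / 4 ≤ (1+a)^2 * (1+b)^2 := by nlinarith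
  have h8 : 8*lam/δ^4 * (b-a) * (δ^4/4) = 2 * lam * (b-a) := by
    field_simp
    ring
  calc lam * (1+b)^2 - (1+a)^2 * lam = lam * ((1+b)^2 - (1+a)^2) := by ring
    _ ≤ 2 * lam * (b - a) := key
    _ = 8*lam/δ^4 * (b-a) * (δ^4/4) := h8.symm
    _ ≤ 8*lam/δ^4 * (b-a) * ((1+a)^2*(1+b)^2) := by
        apply mul_le_mul_of_nonneg_left hprod
        have : 0 < b - a := sub_pos.2 hab
        positivity


lemma upper_bound (lam T σ : ℝ) (hl : 0 < lam) (hσ : 0 < σ) (hσT : σ < T)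
    (u : ℝ → ℝ → ℝ)
    (hu_cont : ContinuousOn (Function.uncurry u)
      (Set.Icc (-1 : ℝ) 1 ×ˢ Set.Icc (0 : ℝ) T))
    (hux : ∀ t ∈ Set.Ioo (0 : ℝ) T, ContDiffOn ℝ 2 (fun x => u x t) (Set.Ioo (-1 : ℝ) 1))
    (hut : ∀ x ∈ Set.Ioo (-1 : ℝ) 1, DifferentiableOn ℝ (fun t => u x t) (Set.Ioo (0 : ℝ) T))
    (hpde : ∀ x ∈ Set.Ioo (-1 : ℝ) 1, ∀ t ∈ Set.Ioo (0 : ℝ) T,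
      deriv (fun t' => u x t') t - deriv (deriv (fun x' => u x' t)) x
        = -lam / (1 + u x t) ^ 2)
    (hbc : ∀ t ∈ Set.Icc (0 : ℝ) T, u (-1) t = 0 ∧ u 1 t = 0)
    (hic : ∀ x ∈ Set.Icc (-1 : ℝ) 1, u x 0 = 0) :
    ∀ x ∈ Set.Icc (-1:ℝ) 1, ∀ t ∈ Set.Icc (0:ℝ) σ, u x t ≤ 0 := by
  have hsubset : Set.Icc (-1:ℝ) 1 ×ˢ Set.Icc (0:ℝ) σ ⊆ Set.Icc (-1:ℝ) 1 ×ˢ Set.Icc (0:ℝ) T :=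
    Set.prod_mono_right (Set.Icc_subset_Icc le_rfl hσT.le)
  have hIocT : Set.Ioc (0:ℝ) σ ⊆ Set.Ioo (0:ℝ) T :=
    fun s hs => ⟨hs.1, lt_of_le_of_lt hs.2 hσT⟩
  intro x hx t ht
  have key : ∀ ε : ℝ, 0 < ε → u x t ≤ ε * σ := by
    intro ε hε
    have hmp := maxPrinciple σ hσ (fun x t => u x t - ε * t)
      (by
        apply ContinuousOn.sub (hu_cont.mono hsubset)
        exact (continuous_const.mul continuous_snd).continuousOn)
      (by
        intro s hs
        exact (hux s (hIocT hs)).sub contDiffOn_const)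
      (by
        intro y hy s hs
        have h1 : DifferentiableAt ℝ (fun t' => u y t') s :=
          (hut y hy).differentiableAt (isOpen_Ioo.mem_nhds (hIocT hs))
        exact h1.sub ((differentiableAt_id.const_mul ε))
      )
      (by
        intro y hy s hs _
        have hsT : s ∈ Set.Ioo (0:ℝ) T := hIocT hs
        have hdu : DifferentiableAt ℝ (fun t' => u y t') s :=
          (hut y hy).differentiableAt (isOpen_Ioo.mem_nhds hsT)
        have hdt : deriv (fun t' => u y t' - ε * t') s = deriv (fun t' => u y t') s - ε := by
          have h2 : HasDerivAt (fun t' : ℝ => ε * t') ε s := by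
            simpa using (hasDerivAt_id s).const_mul ε
          exact (hdu.hasDerivAt.sub h2).deriv
        have hdx : deriv (deriv (fun x' => u x' s - ε * s)) y
            = deriv (deriv (fun x' => u x' s)) y := by
          congr 1
          funext z
          exact deriv_sub_const _
        rw [hdt, hdx]
        have hPDE := hpde y hy s hsT
        have hnn : -lam / (1 + u y s) ^ 2 ≤ 0 := by
          rw [neg_div]
          exact neg_nonpos.2 (div_nonneg hl.le (sq_nonneg _))
        linarith)
      (by
        intro s hs
        have hb := hbc s ⟨hs.1, hs.2.trans hσT.le⟩
        constructor <;> simp [hb.1, hb.2] <;> nlinarith [hs.1]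
      )
      (by
        intro y hy
        simp [hic y hy])
    have h0 : u x t - ε * t ≤ 0 := hmp x hx t ht
    have htσ : t ≤ σ := ht.2
    nlinarith [ht.1, hε.le]
  have := aux_nonpos (u x t) σ hσ.le key
  linarith


lemma lower_core (lam T σ δ : ℝ) (hl : 0 < lam) (hσ : 0 < σ) (hσT : σ < T)
    (hδ : 0 < δ) (hδ1 : δ ≤ 1)
    (u : ℝ → ℝ → ℝ) (U : ℝ → ℝ)
    (hu_cont : ContinuousOn (Function.uncurry u)
      (Set.Icc (-1 : ℝ) 1 ×ˢ Set.Icc (0 : ℝ) T))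
    (hux : ∀ t ∈ Set.Ioo (0 : ℝ) T, ContDiffOn ℝ 2 (fun x => u x t) (Set.Ioo (-1 : ℝ) 1))
    (hut : ∀ x ∈ Set.Ioo (-1 : ℝ) 1, DifferentiableOn ℝ (fun t => u x t) (Set.Ioo (0 : ℝ) T))
    (hpde : ∀ x ∈ Set.Ioo (-1 : ℝ) 1, ∀ t ∈ Set.Ioo (0 : ℝ) T,
      deriv (fun t' => u x t') t - deriv (deriv (fun x' => u x' t)) x
        = -lam / (1 + u x t) ^ 2)
    (hbc : ∀ t ∈ Set.Icc (0 : ℝ) T, u (-1) t = 0 ∧ u 1 t = 0)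
    (hic : ∀ x ∈ Set.Icc (-1 : ℝ) 1, u x 0 = 0)
    (hU_smooth : ContDiffOn ℝ 2 U (Set.Icc (-1 : ℝ) 1))
    (hU_bc : U (-1) = 0 ∧ U 1 = 0)
    (hUlow : ∀ x ∈ Set.Icc (-1:ℝ) 1, -1 + δ ≤ U x)
    (hUhigh : ∀ x ∈ Set.Icc (-1:ℝ) 1, U x ≤ 0)
    (hU_ode : ∀ x ∈ Set.Ioo (-1 : ℝ) 1, deriv (deriv U) x = lam / (1 + U x) ^ 2)
    (hfloor : ∀ x ∈ Set.Icc (-1:ℝ) 1, ∀ s ∈ Set.Icc (0:ℝ) σ, -1 + δ/2 ≤ u x s)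
    (hupper : ∀ x ∈ Set.Icc (-1:ℝ) 1, ∀ s ∈ Set.Icc (0:ℝ) σ, u x s ≤ 0) :
    ∀ x ∈ Set.Icc (-1:ℝ) 1, ∀ s ∈ Set.Icc (0:ℝ) σ, U x ≤ u x s := by
  set K : ℝ := 8 * lam / δ ^ 4 with hKdef
  have hK : 0 < K := by positivity
  have hsubset : Set.Icc (-1:ℝ) 1 ×ˢ Set.Icc (0:ℝ) σ ⊆ Set.Icc (-1:ℝ) 1 ×ˢ Set.Icc (0:ℝ) T :=
    Set.prod_mono_right (Set.Icc_subset_Icc le_rfl hσT.le)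
  have hIocT : Set.Ioc (0:ℝ) σ ⊆ Set.Ioo (0:ℝ) T :=
    fun s hs => ⟨hs.1, lt_of_le_of_lt hs.2 hσT⟩
  intro x hx s hs
  have key : ∀ ε : ℝ, 0 < ε → U x - u x s ≤ ε * (σ * Real.exp (K * σ)) := by
    intro ε hε
    have hmp := maxPrinciple σ hσ
      (fun y t => (U y - u y t) * Real.exp (-(K * t)) - ε * t)
      (by
        apply ContinuousOn.sub
        · apply ContinuousOn.mul
          · exact ((hU_smooth.continuousOn.comp continuous_fst.continuousOn
              (fun p hp => hp.1)).sub (hu_cont.mono hsubset))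
          · exact (Real.continuous_exp.comp
              ((continuous_const.mul continuous_snd).neg)).continuousOn
        · exact (continuous_const.mul continuous_snd).continuousOn)
      (by
        intro t ht
        exact (((hU_smooth.mono Set.Ioo_subset_Icc_self).sub
          (hux t (hIocT ht))).mul contDiffOn_const).sub contDiffOn_const)
      (by
        intro y hy t ht
        have hdu : DifferentiableAt ℝ (fun t' => u y t') t :=
          (hut y hy).differentiableAt (isOpen_Ioo.mem_nhds (hIocT ht))
        have hexp : DifferentiableAt ℝ (fun t' : ℝ => Real.exp (-(K * t'))) t :=
          (Real.differentiable_exp.comp ((differentiable_id.const_mul K).neg)).differentiableAt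
        exact (((differentiableAt_const _).sub hdu).mul hexp).sub
          ((differentiableAt_id.const_mul ε)))
      (by
        intro y hy t ht hvpos
        have htT : t ∈ Set.Ioo (0:ℝ) T := hIocT ht
        have hyIcc : y ∈ Set.Icc (-1:ℝ) 1 := Set.Ioo_subset_Icc_self hy
        have htIcc : t ∈ Set.Icc (0:ℝ) σ := ⟨ht.1.le, ht.2⟩
        set a : ℝ := u y t with ha
        set b : ℝ := U y with hb
        set E : ℝ := Real.exp (-(K * t)) with hE
        have hEpos : 0 < E := Real.exp_pos _
        -- time derivative
        set du : ℝ := deriv (fun t' => u y t') t with hdudef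
        have hdu : HasDerivAt (fun t' => u y t') du t :=
          ((hut y hy).differentiableAt (isOpen_Ioo.mem_nhds htT)).hasDerivAt
        have hlin : HasDerivAt (fun t' : ℝ => -(K * t')) (-K) t := by
          simpa using ((hasDerivAt_id t).const_mul K).fun_neg
        have hexp : HasDerivAt (fun t' => Real.exp (-(K * t'))) (E * -K) t := hlin.exp
        have hprod : HasDerivAt (fun t' => (U y - u y t') * Real.exp (-(K * t')))
            ((0 - du) * E + (b - a) * (E * -K)) t :=
          ((hasDerivAt_const t (U y)).sub hdu).mul hexp
        have hεt : HasDerivAt (fun t' : ℝ => ε * t') ε t := by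
          simpa using (hasDerivAt_id t).const_mul ε
        have hvt_val : deriv (fun t' => (U y - u y t') * Real.exp (-(K * t')) - ε * t') t
            = (0 - du) * E + (b - a) * (E * -K) - ε := (hprod.sub hεt).deriv
        -- spatial second derivative
        have hu_diffOn : DifferentiableOn ℝ (fun x' => u x' t) (Set.Ioo (-1:ℝ) 1) :=
          (hux t htT).differentiableOn (by norm_num)
        have hU_diffOn : DifferentiableOn ℝ U (Set.Icc (-1:ℝ) 1) :=
          hU_smooth.differentiableOn (by norm_num)
        have stepA : (deriv fun x' => (U x' - u x' t) * Real.exp (-(K * t)) - ε * t)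
            = fun z => deriv (fun x' => U x' - u x' t) z * E := by
          funext z
          rw [deriv_sub_const, deriv_mul_const_field]
        have stepB : (fun z => deriv (fun x' => U x' - u x' t) z * E)
            =ᶠ[𝓝 y] (fun z => (deriv U z - deriv (fun x' => u x' t) z) * E) := by
          filter_upwards [isOpen_Ioo.mem_nhds hy] with z hz
          have h1 : DifferentiableAt ℝ U z :=
            hU_diffOn.differentiableAt (Icc_mem_nhds hz.1 hz.2)
          have h2 : DifferentiableAt ℝ (fun x' => u x' t) z :=
            hu_diffOn.differentiableAt (isOpen_Ioo.mem_nhds hz)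
          rw [deriv_fun_sub h1 h2]
        have hU2 : ContDiffOn ℝ 1 (deriv U) (Set.Ioo (-1:ℝ) 1) :=
          (hU_smooth.mono Set.Ioo_subset_Icc_self).deriv_of_isOpen isOpen_Ioo (by norm_num)
        have hu2 : ContDiffOn ℝ 1 (deriv (fun x' => u x' t)) (Set.Ioo (-1:ℝ) 1) :=
          (hux t htT).deriv_of_isOpen isOpen_Ioo (by norm_num)
        have hU2d : DifferentiableAt ℝ (deriv U) y :=
          (hU2.differentiableOn (by norm_num)).differentiableAt (isOpen_Ioo.mem_nhds hy)
        have hu2d : DifferentiableAt ℝ (deriv (fun x' => u x' t)) y :=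
          (hu2.differentiableOn (by norm_num)).differentiableAt (isOpen_Ioo.mem_nhds hy)
        have hvxx : deriv (deriv (fun x' => (U x' - u x' t) * Real.exp (-(K * t)) - ε * t)) y
            = (deriv (deriv U) y - deriv (deriv (fun x' => u x' t)) y) * E := by
          rw [stepA, stepB.deriv_eq, deriv_mul_const_field, deriv_fun_sub hU2d hu2d]
        -- put it together
        have hgoal : deriv (fun t' => (U y - u y t') * Real.exp (-(K * t')) - ε * t') t
            - deriv (deriv (fun x' => (U x' - u x' t) * Real.exp (-(K * t)) - ε * t)) y
            = (0 - du) * E + (b - a) * (E * -K) - ε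
              - (deriv (deriv U) y - deriv (deriv (fun x' => u x' t)) y) * E := by
          rw [hvt_val, hvxx]
        refine lt_of_eq_of_lt hgoal ?_
        have hode := hU_ode y hy
        have hPDE := hpde y hy t htT
        -- from positivity of v : a < b
        have hvpos' : 0 < (b - a) * E - ε * t := hvpos
        have hab : a < b := by
          rcases lt_or_ge a b with h | h
          · exact h
          · exfalso
            have : (b - a) * E ≤ 0 :=
              mul_nonpos_of_nonpos_of_nonneg (by linarith) hEpos.le
            nlinarith [mul_pos hε ht.1]
        -- bounds
        have ha1 : -1 + δ/2 ≤ a := hfloor y hyIcc t htIcc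
        have ha0 : a ≤ 0 := hupper y hyIcc t htIcc
        have hb1 : -1 + δ ≤ b := hUlow y hyIcc
        have hb0 : b ≤ 0 := hUhigh y hyIcc
        have hKI := key_ineq lam δ a b hl hδ hδ1 ha1 ha0 hb1 hb0 hab
        have hB : lam / (1+a)^2 - lam / (1+b)^2 - K * (b - a) ≤ 0 := by
          rw [hKdef]; linarith
        have hEB : E * (lam / (1+a)^2 - lam / (1+b)^2 - K * (b - a)) ≤ 0 :=
          mul_nonpos_of_nonneg_of_nonpos hEpos.le hB
        have hexpand : (0 - du) * E + (b - a) * (E * -K) - ε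
            - (deriv (deriv U) y - deriv (deriv (fun x' => u x' t)) y) * E
            = E * (lam / (1+a)^2 - lam / (1+b)^2 - K * (b - a)) - ε := by
          rw [hode]
          have hxx : deriv (deriv (fun x' => u x' t)) y = du + lam / (1 + a) ^ 2 := by
            rw [← ha, neg_div] at hPDE
            rw [hdudef]
            linarith [hPDE]
          rw [hxx]
          ring
        rw [hexpand]
        linarith)
      (by
        intro t ht
        have hb := hbc t ⟨ht.1, ht.2.trans hσT.le⟩
        have hεt : 0 ≤ ε * t := mul_nonneg hε.le ht.1
        constructor
        · simp only [hb.1, hU_bc.1]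
          simp
          linarith
        · simp only [hb.2, hU_bc.2]
          simp
          linarith)
      (by
        intro y hy
        simp only [hic y hy, mul_zero, neg_zero, Real.exp_zero, mul_one, sub_zero]
        linarith [hUhigh y hy])
    have h1 : (U x - u x s) * Real.exp (-(K * s)) - ε * s ≤ 0 := hmp x hx s hs
    have h2 : U x - u x s ≤ ε * s * Real.exp (K * s) := by
      have h3 := mul_le_mul_of_nonneg_right (by linarith : (U x - u x s) * Real.exp (-(K*s)) ≤ ε * s)
        (Real.exp_pos (K*s)).le
      rwa [mul_assoc, ← Real.exp_add, neg_add_cancel, Real.exp_zero, mul_one] at h3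
    have h4 : Real.exp (K * s) ≤ Real.exp (K * σ) :=
      Real.exp_le_exp.2 (mul_le_mul_of_nonneg_left hs.2 hK.le)
    have h5 : ε * s * Real.exp (K * s) ≤ ε * (σ * Real.exp (K * σ)) := by
      have hsp : 0 ≤ s := hs.1
      calc ε * s * Real.exp (K * s) ≤ ε * s * Real.exp (K * σ) :=
            mul_le_mul_of_nonneg_left h4 (mul_nonneg hε.le hsp)
        _ ≤ ε * (σ * Real.exp (K * σ)) := by
            rw [← mul_assoc]
            exact mul_le_mul_of_nonneg_right
              (mul_le_mul_of_nonneg_left hs.2 hε.le) (Real.exp_pos _).le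
    linarith
  have := aux_nonpos (U x - u x s) (σ * Real.exp (K * σ)) (by positivity) key
  linarith


/-- Parabolic comparison for the small-aspect-ratio MEMS heat equation: a
stationary solution `U` is a barrier from below, so the evolution starting from
rest stays between `U` and `0` and never quenches. -/
theorem heat_no_quenching (lam T : ℝ) (hl : 0 < lam) (hT : 0 < T)
    (u : ℝ → ℝ → ℝ) (U : ℝ → ℝ)
    (hu_cont : ContinuousOn (Function.uncurry u)
      (Set.Icc (-1 : ℝ) 1 ×ˢ Set.Icc (0 : ℝ) T))
    (hux : ∀ t ∈ Set.Ioo (0 : ℝ) T, ContDiffOn ℝ 2 (fun x => u x t) (Set.Ioo (-1 : ℝ) 1))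
    (hut : ∀ x ∈ Set.Ioo (-1 : ℝ) 1, DifferentiableOn ℝ (fun t => u x t) (Set.Ioo (0 : ℝ) T))
    (hpde : ∀ x ∈ Set.Ioo (-1 : ℝ) 1, ∀ t ∈ Set.Ioo (0 : ℝ) T,
      deriv (fun t' => u x t') t - deriv (deriv (fun x' => u x' t)) x
        = -lam / (1 + u x t) ^ 2)
    (hbc : ∀ t ∈ Set.Icc (0 : ℝ) T, u (-1) t = 0 ∧ u 1 t = 0)
    (hic : ∀ x ∈ Set.Icc (-1 : ℝ) 1, u x 0 = 0)
    (hU_smooth : ContDiffOn ℝ 2 U (Set.Icc (-1 : ℝ) 1))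
    (hU_bc : U (-1) = 0 ∧ U 1 = 0)
    (hU_range : ∀ x ∈ Set.Icc (-1 : ℝ) 1, -1 < U x ∧ U x ≤ 0)
    (hU_ode : ∀ x ∈ Set.Ioo (-1 : ℝ) 1, deriv (deriv U) x = lam / (1 + U x) ^ 2) :
    ∀ x ∈ Set.Ioo (-1 : ℝ) 1, ∀ t ∈ Set.Ioo (0 : ℝ) T,
      -1 < U x ∧ U x ≤ u x t ∧ u x t ≤ 0 := by
  intro x hx t ht
  have hxIcc : x ∈ Set.Icc (-1:ℝ) 1 := Set.Ioo_subset_Icc_self hx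
  have htIcc : t ∈ Set.Icc (0:ℝ) t := Set.right_mem_Icc.2 ht.1.le
  -- upper bound
  have hupper : ∀ y ∈ Set.Icc (-1:ℝ) 1, ∀ s ∈ Set.Icc (0:ℝ) t, u y s ≤ 0 :=
    upper_bound lam T t hl ht.1 ht.2 u hu_cont hux hut hpde hbc hic
  refine ⟨(hU_range x hxIcc).1, ?_, hupper x hxIcc t htIcc⟩
  -- δ : uniform distance of U from -1
  obtain ⟨xm, hxm, hmin⟩ := isCompact_Icc.exists_isMinOn
    (Set.nonempty_Icc.2 (by norm_num : (-1:ℝ) ≤ 1)) hU_smooth.continuousOn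
  set δ : ℝ := 1 + U xm with hδdef
  have hδ : 0 < δ := by have := (hU_range xm hxm).1; simp only [hδdef]; linarith
  have hδ1 : δ ≤ 1 := by have := (hU_range xm hxm).2; simp only [hδdef]; linarith
  have hUlow : ∀ y ∈ Set.Icc (-1:ℝ) 1, -1 + δ ≤ U y := by
    intro y hy
    have h : U xm ≤ U y := hmin hy
    simp only [hδdef]
    linarith
  have hUhigh : ∀ y ∈ Set.Icc (-1:ℝ) 1, U y ≤ 0 := fun y hy => (hU_range y hy).2
  -- the bad set A
  set c : ℝ := -1 + δ/2 with hcdef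
  have hcneg : c < 0 := by simp only [hcdef]; linarith
  set S : Set (ℝ × ℝ) := (Set.Icc (-1:ℝ) 1 ×ˢ Set.Icc (0:ℝ) t) ∩
    (Function.uncurry u) ⁻¹' (Set.Iic c) with hSdef
  have hKc : IsCompact (Set.Icc (-1:ℝ) 1 ×ˢ Set.Icc (0:ℝ) t) :=
    isCompact_Icc.prod isCompact_Icc
  have hu_cont' : ContinuousOn (Function.uncurry u) (Set.Icc (-1:ℝ) 1 ×ˢ Set.Icc (0:ℝ) t) :=
    hu_cont.mono (Set.prod_mono_right (Set.Icc_subset_Icc le_rfl ht.2.le))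
  have hSclosed : IsClosed S :=
    hu_cont'.preimage_isClosed_of_isClosed (hKc.isClosed) isClosed_Iic
  have hScompact : IsCompact S := hKc.of_isClosed_subset hSclosed Set.inter_subset_left
  set A : Set ℝ := Prod.snd '' S with hAdef
  have hAcompact : IsCompact A := hScompact.image continuous_snd
  have hAsub : A ⊆ Set.Icc (0:ℝ) t := by
    rintro s ⟨⟨y, s'⟩, hp, rfl⟩
    exact hp.1.2
  -- main claim : A is empty
  have hAempty : A = ∅ := by
    by_contra hne
    have hAne : A.Nonempty := Set.nonempty_iff_ne_empty.2 hne
    set t₁ : ℝ := sInf A with ht₁def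
    have ht₁A : t₁ ∈ A := hAcompact.sInf_mem hAne
    obtain ⟨⟨y₁, s₁⟩, hpS, hsnd⟩ := ht₁A
    have hy₁ : y₁ ∈ Set.Icc (-1:ℝ) 1 := hpS.1.1
    have hs₁ : s₁ = t₁ := hsnd
    have hub : u y₁ t₁ ≤ c := by
      have h := hpS.2
      simp only [Set.mem_preimage, Set.mem_Iic, Function.uncurry] at h
      rwa [hs₁] at h
    have ht₁Icc : t₁ ∈ Set.Icc (0:ℝ) t := hAsub (hAcompact.sInf_mem hAne)
    have ht₁pos : 0 < t₁ := by
      rcases lt_or_eq_of_le ht₁Icc.1 with h | h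
      · exact h
      · exfalso
        rw [← h] at hub
        rw [hic y₁ hy₁] at hub
        linarith
    -- floor on [0, t₁]
    have hfloor₁ : ∀ y ∈ Set.Icc (-1:ℝ) 1, ∀ s ∈ Set.Icc (0:ℝ) t₁, c ≤ u y s := by
      intro y hy s hsI
      rcases lt_or_eq_of_le hsI.2 with hlt | heq
      · -- s < t₁ : s not in A
        by_contra hcon
        push_neg at hcon
        have hsA : s ∈ A := by
          refine ⟨(y, s), ⟨⟨hy, ⟨hsI.1, hsI.2.trans ht₁Icc.2⟩⟩, ?_⟩, rfl⟩
          simp only [Set.mem_preimage, Function.uncurry]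
          exact le_of_lt hcon
        have : t₁ ≤ s := csInf_le hAcompact.bddBelow hsA
        linarith
      · -- s = t₁ : continuity from the left
        have hspos : 0 < s := by rw [heq]; exact ht₁pos
        have hcw : ContinuousWithinAt (fun s' => u y s') (Set.Ioo 0 s) s := by
          have h0 : ContinuousWithinAt (Function.uncurry u ∘ (fun s' => (y, s')))
              (Set.Icc (0:ℝ) t) s := by
            apply ContinuousWithinAt.comp
            · exact hu_cont' (y, s) ⟨hy, ⟨hsI.1, hsI.2.trans ht₁Icc.2⟩⟩
            · exact (continuous_const.prodMk continuous_id).continuousWithinAt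
            · intro s' hs'
              exact ⟨hy, hs'⟩
          exact h0.mono (fun s' hs' => ⟨hs'.1.le, hs'.2.le.trans (heq.le.trans ht₁Icc.2)⟩)
        have hne : (𝓝[Set.Ioo (0:ℝ) s] s).NeBot := right_nhdsWithin_Ioo_neBot hspos
        refine ge_of_tendsto hcw ?_
        filter_upwards [self_mem_nhdsWithin] with s' hs'
        by_contra hcon
        push_neg at hcon
        have hsA : s' ∈ A := by
          refine ⟨(y, s'), ⟨⟨hy, ⟨hs'.1.le, hs'.2.le.trans (heq.le.trans ht₁Icc.2)⟩⟩, ?_⟩, rfl⟩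
          simp only [Set.mem_preimage, Function.uncurry]
          exact le_of_lt hcon
        have : t₁ ≤ s' := csInf_le hAcompact.bddBelow hsA
        linarith [hs'.2, heq.ge]
    -- apply lower_core on [0, t₁]
    have hlow := lower_core lam T t₁ δ hl ht₁pos (lt_of_le_of_lt ht₁Icc.2 ht.2) hδ hδ1
      u U hu_cont hux hut hpde hbc hic hU_smooth hU_bc hUlow hUhigh hU_ode
      (by intro y hy s hsI; exact hfloor₁ y hy s hsI)
      (by intro y hy s hsI
          exact hupper y hy s ⟨hsI.1, hsI.2.trans ht₁Icc.2⟩)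
    have h1 : U y₁ ≤ u y₁ t₁ := hlow y₁ hy₁ t₁ (Set.right_mem_Icc.2 ht₁pos.le)
    have h2 : -1 + δ ≤ U y₁ := hUlow y₁ hy₁
    simp only [hcdef] at hub
    linarith
  -- A empty : floor holds on all of [0, t]
  have hfloor : ∀ y ∈ Set.Icc (-1:ℝ) 1, ∀ s ∈ Set.Icc (0:ℝ) t, c ≤ u y s := by
    intro y hy s hsI
    by_contra hcon
    push_neg at hcon
    have : s ∈ A := by
      refine ⟨(y, s), ⟨⟨hy, hsI⟩, ?_⟩, rfl⟩
      simp only [Set.mem_preimage, Function.uncurry]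
      exact le_of_lt hcon
    rw [hAempty] at this
    exact this
  have hlow := lower_core lam T t δ hl ht.1 ht.2 hδ hδ1
    u U hu_cont hux hut hpde hbc hic hU_smooth hU_bc hUlow hUhigh hU_ode
    (by intro y hy s hsI; exact hfloor y hy s hsI) hupper
  exact hlow x hxIcc t htIcc
end

section
/- Consider the undamped spring model m x'' + k x = λ/(d₀ - x)² with x(0)=0, x'(0)=0. If the solution remains in [0, d₀) and converges (x stays bounded away from d₀ and reaches a turning point x_max where x' = 0 with x_max < d₀), then x_max satisfies (k/2)x_max² = λ x_max/(d₀(d₀ - x_max)), i.e., energy conservation gives (k/2)x_max² - λ/(d₀ - x_max) = -λ/d₀. In particular, the dynamical pull-in condition (k/2)x² = λ(1/(d₀-x) - 1/d₀) has a solution x < d₀ only if λ ≤ k d₀³/8, so the dynamical pull-in value k d₀³/8 is strictly smaller than the static pull-in value 4 k d₀³/27. -/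
/-- Undamped lumped MEMS model starting from rest: at a turning point `x_max`
energy conservation gives `(k/2)x_max² - λ/(d₀-x_max) = -λ/d₀`, i.e.
`(k/2)x_max² = λ x_max/(d₀(d₀-x_max))`; the dynamical pull-in condition has a
solution `0 < x < d₀` only if `λ ≤ k d₀³/8`, which is strictly smaller than the
static pull-in value `4 k d₀³/27`. -/
theorem undamped_dynamical_pull_in (m k d₀ lam t₁ : ℝ)
    (hm : 0 < m) (hk : 0 < k) (hd : 0 < d₀) (hl : 0 < lam) (ht₁ : 0 < t₁)
    (x : ℝ → ℝ) (hx : ContDiff ℝ 2 x)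
    (hic : x 0 = 0 ∧ deriv x 0 = 0)
    (hrange : ∀ t ∈ Set.Icc (0 : ℝ) t₁, 0 ≤ x t ∧ x t < d₀)
    (hode : ∀ t ∈ Set.Icc (0 : ℝ) t₁,
      m * deriv (deriv x) t + k * x t = lam / (d₀ - x t) ^ 2)
    (hturn : deriv x t₁ = 0) :
    (k / 2 * (x t₁) ^ 2 - lam / (d₀ - x t₁) = -lam / d₀) ∧
    (k / 2 * (x t₁) ^ 2 = lam * x t₁ / (d₀ * (d₀ - x t₁))) ∧
    ((∃ y : ℝ, 0 < y ∧ y < d₀ ∧ k / 2 * y ^ 2 = lam * (1 / (d₀ - y) - 1 / d₀)) →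
      lam ≤ k * d₀ ^ 3 / 8) ∧
    k * d₀ ^ 3 / 8 < 4 * k * d₀ ^ 3 / 27 := by
  obtain ⟨hx0, hv0⟩ := hic
  have hx2 : ContDiff ℝ ((1 : WithTop ℕ∞) + 1) x := by
    have h21 : ((1 : WithTop ℕ∞) + 1) = 2 := by norm_num
    rw [h21]; exact hx
  have hdx := (contDiff_succ_iff_deriv.mp hx2).2.2
  have hxd : Differentiable ℝ x := hx.differentiable (by norm_num)
  have hdxd : Differentiable ℝ (deriv x) := hdx.differentiable (by norm_num)
  have hdxc : Continuous (deriv x) := hdx.continuous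
  set E : ℝ → ℝ := fun t => m / 2 * (deriv x t) ^ 2 + k / 2 * (x t) ^ 2 - lam / (d₀ - x t)
    with hE
  have hEconst : ∀ t ∈ Set.Icc (0 : ℝ) t₁, E t = E 0 := by
    apply constant_of_has_deriv_right_zero
    · apply ContinuousOn.sub
      · exact ((continuous_const.mul (hdxc.pow 2)).add
          (continuous_const.mul (hxd.continuous.pow 2))).continuousOn
      · apply ContinuousOn.div continuousOn_const
        · exact (continuous_const.sub hxd.continuous).continuousOn
        · intro t ht
          have := (hrange t ht).2
          intro h; linarith [sub_eq_zero.mp h]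
    · intro t ht
      have ht' : t ∈ Set.Icc (0 : ℝ) t₁ := Set.Ico_subset_Icc_self ht
      obtain ⟨h0, h1⟩ := hrange t ht'
      have hne : d₀ - x t ≠ 0 := by intro h; linarith [sub_eq_zero.mp h]
      have hdx1 : HasDerivAt x (deriv x t) t := (hxd t).hasDerivAt
      have hdx2 : HasDerivAt (deriv x) (deriv (deriv x) t) t := (hdxd t).hasDerivAt
      have hA : HasDerivAt (fun s => m / 2 * (deriv x s) ^ 2)
          (m / 2 * ((2 : ℕ) * (deriv x t) ^ 1 * deriv (deriv x) t)) t :=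
        (hdx2.pow 2).const_mul _
      have hB : HasDerivAt (fun s => k / 2 * (x s) ^ 2)
          (k / 2 * ((2 : ℕ) * (x t) ^ 1 * deriv x t)) t := (hdx1.pow 2).const_mul _
      have hC : HasDerivAt (fun s => lam / (d₀ - x s))
          ((0 * (d₀ - x t) - lam * (0 - deriv x t)) / (d₀ - x t) ^ 2) t :=
        (hasDerivAt_const t lam).div ((hasDerivAt_const t d₀).sub hdx1) hne
      have hD : HasDerivAt E
          (m / 2 * ((2 : ℕ) * (deriv x t) ^ 1 * deriv (deriv x) t)
            + k / 2 * ((2 : ℕ) * (x t) ^ 1 * deriv x t)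
            - (0 * (d₀ - x t) - lam * (0 - deriv x t)) / (d₀ - x t) ^ 2) t :=
        (hA.add hB).sub hC
      have hz : m / 2 * ((2 : ℕ) * (deriv x t) ^ 1 * deriv (deriv x) t)
            + k / 2 * ((2 : ℕ) * (x t) ^ 1 * deriv x t)
            - (0 * (d₀ - x t) - lam * (0 - deriv x t)) / (d₀ - x t) ^ 2 = 0 := by
        rw [show (0 * (d₀ - x t) - lam * (0 - deriv x t)) / (d₀ - x t) ^ 2
            = deriv x t * (lam / (d₀ - x t) ^ 2) by ring, ← hode t ht']
        push_cast
        ring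
      rw [hz] at hD
      exact hD.hasDerivWithinAt
  have hkey := hEconst t₁ (Set.mem_Icc.mpr ⟨ht₁.le, le_rfl⟩)
  have hx1lt : x t₁ < d₀ := (hrange t₁ (Set.mem_Icc.mpr ⟨ht₁.le, le_rfl⟩)).2
  have hne1 : d₀ - x t₁ ≠ 0 := by intro h; linarith [sub_eq_zero.mp h]
  have hdne : d₀ ≠ 0 := ne_of_gt hd
  simp only [hE, hx0, hv0, hturn] at hkey
  norm_num at hkey
  have h1 : k / 2 * (x t₁) ^ 2 - lam / (d₀ - x t₁) = -lam / d₀ := by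
    rw [hkey]; ring
  refine ⟨h1, ?_, ?_, ?_⟩
  · field_simp at h1 ⊢
    nlinarith [h1]
  · rintro ⟨y, hy0, hyd, hy⟩
    have hney : d₀ - y ≠ 0 := by intro h; linarith [sub_eq_zero.mp h]
    have : k / 2 * y ^ 2 * ((d₀ - y) * d₀) = lam * y := by
      field_simp at hy; nlinarith [hy]
    have hlam : lam = k / 2 * y * (d₀ - y) * d₀ := by
      have hy0' : y ≠ 0 := ne_of_gt hy0
      field_simp at this ⊢
      nlinarith [this]
    rw [hlam]
    nlinarith [mul_nonneg (mul_nonneg hk.le hd.le) (sq_nonneg (y - d₀ / 2))]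
  · nlinarith [pow_pos hd 3]
end

section
/- If u : [-1,1] → ℝ is C², u(±1) = 0, -1 < u ≤ 0, and u''(x) = λ (1 + ε² u'(x)²)/(1+u(x))² · g(x)² with λ > 0, ε ≥ 0, and g : (-1,1) → ℝ continuous with g(x)² ≥ c > 0, then λ c ≤ 2. In particular the set of λ for which such a solution exists is bounded above by 2/c. -/
/-- A priori bound for the generalized stationary membrane equation: if the
trace term satisfies `g(x)² ≥ c > 0`, then `λ c ≤ 2`; in particular the set of
admissible `λ` is bounded above by `2/c`. -/
theorem generalized_lambda_bound (lam ε c : ℝ) (hl : 0 < lam) (hε : 0 ≤ ε)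
    (hc : 0 < c) (u g : ℝ → ℝ)
    (hu_smooth : ContDiffOn ℝ 2 u (Set.Icc (-1 : ℝ) 1))
    (hbc : u (-1) = 0 ∧ u 1 = 0)
    (hu : ∀ x ∈ Set.Icc (-1 : ℝ) 1, -1 < u x ∧ u x ≤ 0)
    (hg_cont : ContinuousOn g (Set.Ioo (-1 : ℝ) 1))
    (hg : ∀ x ∈ Set.Ioo (-1 : ℝ) 1, c ≤ (g x) ^ 2)
    (hode : ∀ x ∈ Set.Ioo (-1 : ℝ) 1,
      deriv (deriv u) x
        = lam * (1 + ε ^ 2 * (deriv u x) ^ 2) / (1 + u x) ^ 2 * (g x) ^ 2) :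
    lam * c ≤ 2 ∧ lam ≤ 2 / c := by
  obtain ⟨hb1, hb2⟩ := hbc
  set q : ℝ → ℝ := fun x => lam * c / 2 * (x ^ 2 - 1) with hqdef
  set f : ℝ → ℝ := fun x => u x - q x with hfdef
  have hIoo : Set.Ioo (-1:ℝ) 1 ⊆ Set.Icc (-1:ℝ) 1 := Set.Ioo_subset_Icc_self
  have hopen : IsOpen (Set.Ioo (-1:ℝ) 1) := isOpen_Ioo
  have hu2 : ContDiffOn ℝ 2 u (Set.Ioo (-1:ℝ) 1) := hu_smooth.mono hIoo
  have hud : DifferentiableOn ℝ u (Set.Ioo (-1:ℝ) 1) :=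
    hu2.differentiableOn (by norm_num)
  have hud' : ContDiffOn ℝ 1 (deriv u) (Set.Ioo (-1:ℝ) 1) :=
    hu2.deriv_of_isOpen hopen (by norm_num)
  have hud'' : DifferentiableOn ℝ (deriv u) (Set.Ioo (-1:ℝ) 1) :=
    hud'.differentiableOn one_ne_zero
  have hq' : ∀ x : ℝ, HasDerivAt q (lam * c * x) x := by
    intro x
    have := ((hasDerivAt_pow 2 x).sub_const 1).const_mul (lam * c / 2)
    exact this.congr_deriv (by norm_num; ring)
  have huat : ∀ x ∈ Set.Ioo (-1:ℝ) 1, HasDerivAt u (deriv u x) x := fun x hx =>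
    ((hud x hx).differentiableAt (hopen.mem_nhds hx)).hasDerivAt
  have hfderiv : ∀ x ∈ Set.Ioo (-1:ℝ) 1, deriv f x = deriv u x - lam * c * x :=
    fun x hx => ((huat x hx).sub (hq' x)).deriv
  set F : ℝ → ℝ := fun x => deriv u x - lam * c * x with hFdef
  have hFat : ∀ x ∈ Set.Ioo (-1:ℝ) 1, HasDerivAt F (deriv (deriv u) x - lam * c) x := by
    intro x hx
    have h1 : HasDerivAt (deriv u) (deriv (deriv u) x) x :=
      ((hud'' x hx).differentiableAt (hopen.mem_nhds hx)).hasDerivAt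
    exact h1.sub (by simpa using (hasDerivAt_id x).const_mul (lam * c))
  have hEq : ∀ x ∈ Set.Ioo (-1:ℝ) 1, deriv f =ᶠ[nhds x] F := by
    intro x hx
    filter_upwards [hopen.mem_nhds hx] with y hy
    exact hfderiv y hy
  -- the ODE gives u'' ≥ lam * c on the interior
  have hlow : ∀ x ∈ Set.Ioo (-1:ℝ) 1, lam * c ≤ deriv (deriv u) x := by
    intro x hx
    have hux := hu x (hIoo hx)
    have hB0 : 0 < 1 + u x := by linarith [hux.1]
    have hB1 : 1 + u x ≤ 1 := by linarith [hux.2]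
    have hBsq : 0 < (1 + u x) ^ 2 := by positivity
    have hBsq1 : (1 + u x) ^ 2 ≤ 1 := by nlinarith
    have hA : (1:ℝ) ≤ 1 + ε ^ 2 * (deriv u x) ^ 2 := by nlinarith [sq_nonneg (ε * deriv u x)]
    have hG := hg x hx
    rw [hode x hx, div_mul_eq_mul_div, le_div_iff₀ hBsq]
    have s1 : lam * c * (1 + u x) ^ 2 ≤ lam * c :=  by nlinarith [mul_pos hl hc]
    have s2 : lam * c ≤ lam * g x ^ 2 := by nlinarith
    have s3 : 0 ≤ (1 + ε ^ 2 * deriv u x ^ 2 - 1) * g x ^ 2 :=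
      mul_nonneg (by linarith) (sq_nonneg _)
    nlinarith
  have hsec : ∀ x ∈ Set.Ioo (-1:ℝ) 1, 0 ≤ deriv (deriv f) x := by
    intro x hx
    have h1 : deriv (deriv f) x = deriv F x := (hEq x hx).deriv_eq
    have h2 : deriv F x = deriv (deriv u) x - lam * c := (hFat x hx).deriv
    rw [h1, h2]
    linarith [hlow x hx]
  -- f is convex on [-1,1]
  have hintD : interior (Set.Icc (-1:ℝ) 1) = Set.Ioo (-1:ℝ) 1 := interior_Icc
  have hfc : ContinuousOn f (Set.Icc (-1:ℝ) 1) := by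
    apply hu_smooth.continuousOn.sub
    exact (continuous_const.mul ((continuous_pow 2).sub continuous_const)).continuousOn
  have hfd : DifferentiableOn ℝ f (interior (Set.Icc (-1:ℝ) 1)) := by
    rw [hintD]
    intro x hx
    exact (((huat x hx).sub (hq' x)).differentiableAt).differentiableWithinAt
  have hfd2 : DifferentiableOn ℝ (deriv f) (interior (Set.Icc (-1:ℝ) 1)) := by
    rw [hintD]
    intro x hx
    exact (((hFat x hx).differentiableAt).congr_of_eventuallyEq
      (hEq x hx)).differentiableWithinAt
  have hconv : ConvexOn ℝ (Set.Icc (-1:ℝ) 1) f := by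
    apply convexOn_of_deriv2_nonneg (convex_Icc _ _) hfc hfd hfd2
    intro x hx
    rw [hintD] at hx
    simpa [Function.iterate_succ, Function.iterate_zero] using hsec x hx
  -- evaluate convexity at the midpoint
  have hm1 : (-1:ℝ) ∈ Set.Icc (-1:ℝ) 1 := by norm_num
  have hp1 : (1:ℝ) ∈ Set.Icc (-1:ℝ) 1 := by norm_num
  have hkey := hconv.2 hm1 hp1 (by norm_num : (0:ℝ) ≤ 1/2) (by norm_num : (0:ℝ) ≤ 1/2)
    (by norm_num : (1/2:ℝ) + 1/2 = 1)
  have hmid : (1/2:ℝ) • (-1:ℝ) + (1/2:ℝ) • (1:ℝ) = 0 := by norm_num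
  rw [hmid] at hkey
  have hf0 : f 0 = u 0 + lam * c / 2 := by simp [hfdef, hqdef]
  have hfm1 : f (-1) = 0 := by simp [hfdef, hqdef, hb1]
  have hfp1 : f 1 = 0 := by simp [hfdef, hqdef, hb2]
  rw [hf0, hfm1, hfp1] at hkey
  norm_num at hkey
  have hu0 := (hu 0 (by norm_num)).1
  have h2 : lam * c ≤ 2 := by
    have : u 0 + lam * c / 2 ≤ 0 := by linarith [hkey]
    linarith
  exact ⟨h2, by rw [le_div_iff₀ hc]; exact h2⟩
end
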